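/- arXiv:2403.13639 — 4 statements merged into one kernel-verified Lean document; each statement's English description precedes it below -/
import Mathlib

section
/- The optimal value of a right-hand-side parametric linear program is convex and continuous piecewise affine: let G be a real p×m matrix, S a real p×n matrix, w ∈ ℝ^p, and c ∈ ℝ^m, and suppose that for every x ∈ ℝ^n the polyhedron U(x) = {u ∈ ℝ^m : G u ≤ w + S x} is nonempty and compact. Then the function J : ℝ^n → ℝ defined by J(x) = min{ cᵀu : u ∈ U(x) } is convex on ℝ^n and continuous piecewise affine. -/
open Matrix Set Module

namespace ParamLP

variable {p m : ℕ}

/-- Feasible set. -/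
def feas (G : Matrix (Fin p) (Fin m) ℝ) (b : Fin p → ℝ) : Set (Fin m → ℝ) :=
  {u | ∀ i, G.mulVec u i ≤ b i}

/-- Span of the active constraint rows. -/
def aSpan (G : Matrix (Fin p) (Fin m) ℝ) (b : Fin p → ℝ) (u : Fin m → ℝ) :
    Submodule ℝ (Fin m → ℝ) :=
  Submodule.span ℝ ((fun i => G i) '' {i | G.mulVec u i = b i})

variable {G : Matrix (Fin p) (Fin m) ℝ} {b : Fin p → ℝ} {c : Fin m → ℝ}

lemma step (hcpt : IsCompact (feas G b)) {u : Fin m → ℝ}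
    (hu : u ∈ feas G b) (hmin : IsMinOn (fun v => c ⬝ᵥ v) (feas G b) u)
    (hne : aSpan G b u ≠ ⊤) :
    ∃ u' ∈ feas G b, IsMinOn (fun v => c ⬝ᵥ v) (feas G b) u' ∧
      finrank ℝ (aSpan G b u) < finrank ℝ (aSpan G b u') := by
  classical
  obtain ⟨φ, hφ0, hφ⟩ :=
    Submodule.exists_dual_map_eq_bot_of_lt_top (lt_top_iff_ne_top.2 hne) inferInstance
  set d : Fin m → ℝ := fun j => φ (fun j' => if j = j' then 1 else 0) with hd
  have hdot : ∀ v : Fin m → ℝ, v ⬝ᵥ d = φ v := by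
    intro v
    have h1 := congrArg φ (pi_eq_sum_univ v)
    rw [map_sum] at h1
    simp only [_root_.map_smul, smul_eq_mul] at h1
    rw [h1]
    simp [dotProduct, hd]
  have hφspan : ∀ v ∈ aSpan G b u, φ v = 0 := by
    intro v hv
    have : φ v ∈ (aSpan G b u).map φ := ⟨v, hv, rfl⟩
    rw [hφ] at this; simpa using this
  have hdne : d ≠ 0 := by
    intro h
    apply hφ0
    apply LinearMap.ext
    intro v
    rw [← hdot v, h]
    simp [dotProduct]
  set q := G.mulVec d with hq
  have hq0 : ∀ i, G.mulVec u i = b i → q i = 0 := by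
    intro i hi
    have : (G i) ⬝ᵥ d = 0 := by
      rw [hdot]
      exact hφspan _ (Submodule.subset_span ⟨i, hi, rfl⟩)
    exact this
  have hexp : ∀ (t : ℝ) i, G.mulVec (u + t • d) i = G.mulVec u i + t * q i := by
    intro t i
    rw [Matrix.mulVec_add, Matrix.mulVec_smul]
    simp [hq]
  have hlocal : ∃ ε > 0, ∀ t : ℝ, |t| ≤ ε → u + t • d ∈ feas G b := by
    set F := Finset.univ.filter (fun i => q i ≠ 0) with hF
    by_cases hFne : F.Nonempty
    · refine ⟨F.inf' hFne (fun i => (b i - G.mulVec u i) / |q i|), ?_, ?_⟩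
      · show 0 < _
        rw [Finset.lt_inf'_iff]
        intro i hi
        have hqi : q i ≠ 0 := (Finset.mem_filter.1 hi).2
        have h2 : G.mulVec u i < b i :=
          lt_of_le_of_ne (hu i) (fun h => hqi (hq0 i h))
        exact div_pos (by linarith) (abs_pos.2 hqi)
      · intro t ht i
        show G.mulVec (u + t • d) i ≤ b i
        rw [hexp]
        by_cases hqi : q i = 0
        · rw [hqi, mul_zero, add_zero]; exact hu i
        · have hiF : i ∈ F := by
            rw [hF]; exact Finset.mem_filter.2 ⟨Finset.mem_univ i, hqi⟩
          have h1 := Finset.inf'_le (fun i => (b i - G.mulVec u i) / |q i|) hiF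
          have h2 : t * q i ≤ |t| * |q i| := by
            calc t * q i ≤ |t * q i| := le_abs_self _
            _ = |t| * |q i| := abs_mul _ _
          have h3 : |t| * |q i| ≤ ((b i - G.mulVec u i) / |q i|) * |q i| := by
            apply mul_le_mul_of_nonneg_right _ (abs_nonneg _)
            exact le_trans ht h1
          rw [div_mul_cancel₀ _ (abs_ne_zero.2 hqi)] at h3
          linarith
    · refine ⟨1, one_pos, fun t ht i => ?_⟩
      show G.mulVec (u + t • d) i ≤ b i
      rw [hexp]
      have : q i = 0 := by
        by_contra h
        exact hFne ⟨i, by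
          rw [hF]; exact Finset.mem_filter.2 ⟨Finset.mem_univ i, h⟩⟩
      rw [this, mul_zero, add_zero]; exact hu i
  have hcd : c ⬝ᵥ d = 0 := by
    by_contra hcd
    obtain ⟨ε, hε, hfeas⟩ := hlocal
    set t : ℝ := if 0 < c ⬝ᵥ d then -ε else ε with htdef
    have habs : |t| ≤ ε := by
      rcases lt_or_ge 0 (c ⬝ᵥ d) with h | h
      · rw [htdef, if_pos h, abs_neg, abs_of_pos hε]
      · rw [htdef, if_neg (not_lt.2 h), abs_of_pos hε]
    have hmem := hfeas t habs
    have hle : c ⬝ᵥ u ≤ c ⬝ᵥ (u + t • d) := hmin hmem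
    have hval : c ⬝ᵥ (u + t • d) = c ⬝ᵥ u + t * (c ⬝ᵥ d) := by
      rw [dotProduct_add, dotProduct_smul]; simp [smul_eq_mul]
    have hneg : t * (c ⬝ᵥ d) < 0 := by
      rcases lt_or_gt_of_ne hcd with h | h
      · have : t = ε := by simp [htdef, not_lt.2 h.le]
        nlinarith
      · have : t = -ε := by simp [htdef, h]
        nlinarith
    rw [hval] at hle
    linarith
  have hSplus : (Finset.univ.filter (fun i => 0 < q i)).Nonempty := by
    by_contra hS
    rw [Finset.not_nonempty_iff_eq_empty, Finset.filter_eq_empty_iff] at hS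
    obtain ⟨R, hR⟩ := isBounded_iff_forall_norm_le.1 hcpt.isBounded
    have hdpos : (0:ℝ) < ‖d‖ := norm_pos_iff.2 hdne
    have hRu := hR u hu
    set t : ℝ := (R + ‖u‖ + 1) / ‖d‖ with htdef
    have ht0 : 0 ≤ t := div_nonneg (by have := norm_nonneg u; linarith) hdpos.le
    have hmem : u + t • d ∈ feas G b := by
      intro i
      show G.mulVec (u + t • d) i ≤ b i
      rw [hexp]
      have hqi : q i ≤ 0 := le_of_not_gt (hS (Finset.mem_univ i))
      nlinarith [hu i]
    have h1 := hR _ hmem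
    have h2 : ‖t • d‖ ≤ ‖u + t • d‖ + ‖u‖ := by
      calc ‖t • d‖ = ‖(u + t • d) - u‖ := by congr 1; abel
      _ ≤ ‖u + t • d‖ + ‖u‖ := norm_sub_le _ _
    rw [norm_smul, Real.norm_eq_abs, abs_of_nonneg ht0, htdef,
      div_mul_cancel₀ _ hdpos.ne'] at h2
    linarith
  obtain ⟨i₀, hi₀mem, hi₀min⟩ :=
    Finset.exists_min_image _ (fun i => (b i - G.mulVec u i) / q i) hSplus
  have hq₀ : 0 < q i₀ := (Finset.mem_filter.1 hi₀mem).2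
  set T : ℝ := (b i₀ - G.mulVec u i₀) / q i₀ with hTdef
  have hT0 : 0 ≤ T := div_nonneg (sub_nonneg.2 (hu i₀)) hq₀.le
  have hmem' : u + T • d ∈ feas G b := by
    intro i
    show G.mulVec (u + T • d) i ≤ b i
    rw [hexp]
    rcases le_or_gt (q i) 0 with h | h
    · nlinarith [hu i]
    · have h1 := hi₀min i (Finset.mem_filter.2 ⟨Finset.mem_univ i, h⟩)
      have h2 : T * q i ≤ (b i - G.mulVec u i) := by
        rw [le_div_iff₀ h] at h1
        linarith
      linarith
  have hval' : c ⬝ᵥ (u + T • d) = c ⬝ᵥ u := by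
    rw [dotProduct_add, dotProduct_smul, hcd]; simp
  refine ⟨u + T • d, hmem', ?_, ?_⟩
  · intro v hv
    show c ⬝ᵥ (u + T • d) ≤ c ⬝ᵥ v
    rw [hval']
    exact hmin hv
  · have hsub : aSpan G b u ≤ aSpan G b (u + T • d) := by
      apply Submodule.span_mono
      apply Set.image_mono
      intro i hi
      rw [Set.mem_setOf_eq] at *
      rw [hexp, hq0 i hi, mul_zero, add_zero]; exact hi
    have hact₀ : G.mulVec (u + T • d) i₀ = b i₀ := by
      rw [hexp, hTdef, div_mul_cancel₀ _ hq₀.ne']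
      ring
    have hnew : G i₀ ∈ aSpan G b (u + T • d) :=
      Submodule.subset_span ⟨i₀, hact₀, rfl⟩
    have hnotold : G i₀ ∉ aSpan G b u := by
      intro h
      have h1 := hφspan _ h
      rw [← hdot (G i₀)] at h1
      exact hq₀.ne' h1
    exact Submodule.finrank_lt_finrank_of_lt
      (lt_of_le_of_ne hsub (fun h => hnotold (h ▸ hnew)))

lemma exists_top (hcpt : IsCompact (feas G b)) :
    ∀ k : ℕ, ∀ u ∈ feas G b, IsMinOn (fun v => c ⬝ᵥ v) (feas G b) u →
      m - finrank ℝ (aSpan G b u) ≤ k →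
      ∃ u' ∈ feas G b, IsMinOn (fun v => c ⬝ᵥ v) (feas G b) u' ∧ aSpan G b u' = ⊤ := by
  intro k
  induction k with
  | zero =>
    intro u hu hmin hk
    refine ⟨u, hu, hmin, ?_⟩
    have h1 : finrank ℝ (aSpan G b u) ≤ finrank ℝ (Fin m → ℝ) := Submodule.finrank_le _
    rw [Module.finrank_fin_fun] at h1
    exact Submodule.eq_top_of_finrank_eq (by rw [Module.finrank_fin_fun]; omega)
  | succ k ih =>
    intro u hu hmin hk
    by_cases htop : aSpan G b u = ⊤
    · exact ⟨u, hu, hmin, htop⟩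
    · obtain ⟨u', hu', hmin', hlt⟩ := step hcpt hu hmin htop
      exact ih u' hu' hmin' (by omega)

lemma exists_vertex (hne : (feas G b).Nonempty) (hcpt : IsCompact (feas G b)) :
    ∃ u ∈ feas G b, IsMinOn (fun v => c ⬝ᵥ v) (feas G b) u ∧
      ∃ s : Fin m → Fin p, IsUnit (G.submatrix s id) ∧
        ∀ k, G.mulVec u (s k) = b (s k) := by
  classical
  have hcont : Continuous (fun v : Fin m → ℝ => c ⬝ᵥ v) := by
    unfold dotProduct
    exact continuous_finset_sum _ fun i _ => continuous_const.mul (continuous_apply i)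
  obtain ⟨u₀, hu₀, hmin₀⟩ := hcpt.exists_isMinOn hne hcont.continuousOn
  obtain ⟨u, hu, hmin, htop⟩ :=
    exists_top hcpt m u₀ hu₀ hmin₀ (Nat.sub_le _ _)
  have hspan : Submodule.span ℝ ((fun i => G i) '' {i | G.mulVec u i = b i}) = ⊤ := htop
  obtain ⟨bs, hbst, hbspan, hbind⟩ :=
    exists_linearIndependent ℝ ((fun i => G i) '' {i | G.mulVec u i = b i})
  rw [hspan] at hbspan
  let B : Basis bs ℝ (Fin m → ℝ) := Basis.mk hbind (by rw [Subtype.range_coe, hbspan])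
  haveI : Fintype bs := FiniteDimensional.fintypeBasisIndex B
  have hcard : Fintype.card bs = m := by
    rw [← Module.finrank_eq_card_basis B, Module.finrank_fin_fun]
  let e : Fin m ≃ bs := (Fintype.equivFinOfCardEq hcard).symm
  have hmem : ∀ v : bs, ∃ i, G.mulVec u i = b i ∧ G i = (v : Fin m → ℝ) := by
    intro v
    obtain ⟨i, hi, hGi⟩ := hbst v.2
    exact ⟨i, hi, hGi⟩
  choose ι hact hG using hmem
  refine ⟨u, hu, hmin, fun k => ι (e k), ?_, fun k => hact (e k)⟩
  rw [← Matrix.linearIndependent_rows_iff_isUnit]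
  have hrows : (fun k => (G.submatrix (fun k => ι (e k)) id) k)
      = fun k => ((e k : bs) : Fin m → ℝ) := by
    funext k
    ext j
    simp [Matrix.submatrix_apply]
    exact congrFun (hG (e k)) j
  show LinearIndependent ℝ (fun k => (G.submatrix (fun k => ι (e k)) id) k)
  rw [hrows]
  exact hbind.comp e e.injective

end ParamLP

open ParamLP


/-- A function `h : ℝ^d → ℝ` is continuous piecewise affine if it is continuous and
there are finitely many affine functions `gᵢ(x) = ⟨aᵢ, x⟩ + cᵢ` such that for every `x`,
`h x` equals `gᵢ x` for some `i`. -/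
def IsCPWA {d : ℕ} (h : (Fin d → ℝ) → ℝ) : Prop :=
  Continuous h ∧ ∃ (r : ℕ) (a : Fin r → Fin d → ℝ) (c : Fin r → ℝ),
    ∀ x : Fin d → ℝ, ∃ i : Fin r, h x = (∑ j, a i j * x j) + c i

/-- The optimal value `J(x) = min{cᵀu : G u ≤ w + S x}` of a right-hand-side parametric
linear program whose feasible polyhedron is nonempty and compact for every `x` is convex
and continuous piecewise affine. -/
theorem parametric_lp_value_convex_isCPWA {p m n : ℕ}
    (G : Matrix (Fin p) (Fin m) ℝ) (S : Matrix (Fin p) (Fin n) ℝ)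
    (w : Fin p → ℝ) (c : Fin m → ℝ)
    (hne : ∀ x : Fin n → ℝ,
      {u : Fin m → ℝ | ∀ i, G.mulVec u i ≤ w i + S.mulVec x i}.Nonempty)
    (hcpt : ∀ x : Fin n → ℝ,
      IsCompact {u : Fin m → ℝ | ∀ i, G.mulVec u i ≤ w i + S.mulVec x i}) :
    ConvexOn ℝ Set.univ (fun x : Fin n → ℝ =>
      sInf ((fun u : Fin m → ℝ => ∑ i, c i * u i) ''
        {u : Fin m → ℝ | ∀ i, G.mulVec u i ≤ w i + S.mulVec x i})) ∧
    IsCPWA (fun x : Fin n → ℝ =>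
      sInf ((fun u : Fin m → ℝ => ∑ i, c i * u i) ''
        {u : Fin m → ℝ | ∀ i, G.mulVec u i ≤ w i + S.mulVec x i})) := by
  classical
  set b : (Fin n → ℝ) → Fin p → ℝ := fun x i => w i + S.mulVec x i with hb
  have hset : ∀ x, {u : Fin m → ℝ | ∀ i, G.mulVec u i ≤ w i + S.mulVec x i}
      = feas G (b x) := fun x => rfl
  have hcont : Continuous (fun u : Fin m → ℝ => ∑ i, c i * u i) :=
    continuous_finset_sum _ fun i _ => continuous_const.mul (continuous_apply i)
  have key : ∀ x, ∃ u ∈ feas G (b x),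
      IsMinOn (fun v => c ⬝ᵥ v) (feas G (b x)) u ∧
      ∃ s : Fin m → Fin p, IsUnit (G.submatrix s id) ∧
        ∀ k, G.mulVec u (s k) = b x (s k) := fun x =>
    exists_vertex (by rw [← hset]; exact hne x) (by rw [← hset]; exact hcpt x)
  set J : (Fin n → ℝ) → ℝ := fun x =>
    sInf ((fun u : Fin m → ℝ => ∑ i, c i * u i) ''
      {u : Fin m → ℝ | ∀ i, G.mulVec u i ≤ w i + S.mulVec x i}) with hJdef
  have hJ : ∀ x u, u ∈ feas G (b x) →
      IsMinOn (fun v => c ⬝ᵥ v) (feas G (b x)) u → J x = c ⬝ᵥ u := by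
    intro x u hu hmin
    apply IsLeast.csInf_eq
    constructor
    · exact ⟨u, hu, rfl⟩
    · rintro z ⟨v, hv, rfl⟩
      exact hmin hv
  have hbdd : ∀ x, BddBelow ((fun u : Fin m → ℝ => ∑ i, c i * u i) ''
      {u : Fin m → ℝ | ∀ i, G.mulVec u i ≤ w i + S.mulVec x i}) := fun x =>
    ((hcpt x).image hcont).bddBelow
  have hconv : ConvexOn ℝ Set.univ J := by
    refine ⟨convex_univ, ?_⟩
    intro x _ y _ a a' ha ha' hab
    obtain ⟨u, hu, humin, -⟩ := key x
    obtain ⟨v, hv, hvmin, -⟩ := key y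
    have hx := hJ x u hu humin
    have hy := hJ y v hv hvmin
    have hmem : a • u + a' • v ∈ feas G (b (a • x + a' • y)) := by
      intro i
      have h1 : G.mulVec (a • u + a' • v) i = a * G.mulVec u i + a' * G.mulVec v i := by
        rw [Matrix.mulVec_add, Matrix.mulVec_smul, Matrix.mulVec_smul]
        simp
      have h2 : S.mulVec (a • x + a' • y) i = a * S.mulVec x i + a' * S.mulVec y i := by
        rw [Matrix.mulVec_add, Matrix.mulVec_smul, Matrix.mulVec_smul]
        simp
      have h3 := hu i
      have h4 := hv i
      show G.mulVec (a • u + a' • v) i ≤ w i + S.mulVec (a • x + a' • y) i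
      rw [h1, h2]
      have h5 : a * G.mulVec u i ≤ a * (w i + S.mulVec x i) :=
        mul_le_mul_of_nonneg_left h3 ha
      have h6 : a' * G.mulVec v i ≤ a' * (w i + S.mulVec y i) :=
        mul_le_mul_of_nonneg_left h4 ha'
      have h7 : a * w i + a' * w i = w i := by
        rw [← add_mul, hab, one_mul]
      nlinarith
    have hle : J (a • x + a' • y) ≤ c ⬝ᵥ (a • u + a' • v) :=
      csInf_le (hbdd _) ⟨a • u + a' • v, hmem, rfl⟩
    have hval : c ⬝ᵥ (a • u + a' • v) = a * (c ⬝ᵥ u) + a' * (c ⬝ᵥ v) := by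
      rw [dotProduct_add, dotProduct_smul, dotProduct_smul]
      simp
    simp only [smul_eq_mul]
    rw [hx, hy] at *
    linarith [hle, hval.le, hval.ge]
  have hc : Continuous J :=
    continuousOn_univ.1 (hconv.continuousOn isOpen_univ)
  refine ⟨hconv, hc, Fintype.card (Fin m → Fin p), ?_⟩
  set e : (Fin m → Fin p) ≃ Fin (Fintype.card (Fin m → Fin p)) :=
    Fintype.equivFin _ with he
  set A : (Fin m → Fin p) → Fin n → ℝ := fun s =>
    Matrix.vecMul (Matrix.vecMul c (G.submatrix s id)⁻¹) (S.submatrix s id) with hA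
  set C : (Fin m → Fin p) → ℝ := fun s =>
    Matrix.vecMul c (G.submatrix s id)⁻¹ ⬝ᵥ (fun k => w (s k)) with hC
  refine ⟨fun ι => A (e.symm ι), fun ι => C (e.symm ι), ?_⟩
  intro x
  obtain ⟨u, hu, hmin, s, hunit, hact⟩ := key x
  refine ⟨e s, ?_⟩
  simp only [Equiv.symm_apply_apply]
  have hJx : J x = c ⬝ᵥ u := hJ x u hu hmin
  set M := G.submatrix s id with hM
  have hdet : IsUnit M.det := (Matrix.isUnit_iff_isUnit_det M).1 hunit
  have hMu : M.mulVec u = fun k => w (s k) + S.mulVec x (s k) := funext fun k => hact k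
  have hueq : u = M⁻¹.mulVec ((fun k => w (s k)) + (S.submatrix s id).mulVec x) := by
    have hsplit : (fun k => w (s k) + S.mulVec x (s k))
        = (fun k => w (s k)) + (S.submatrix s id).mulVec x := by
      funext k
      show w (s k) + S.mulVec x (s k) = w (s k) + (S.submatrix s id).mulVec x k
      rfl
    rw [← hsplit, ← hMu, Matrix.mulVec_mulVec, Matrix.nonsing_inv_mul _ hdet,
      Matrix.one_mulVec]
  have hvalue : J x = C s + A s ⬝ᵥ x := by
    rw [hJx, hueq, Matrix.dotProduct_mulVec, dotProduct_add, hC, hA,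
      Matrix.dotProduct_mulVec]
  rw [hvalue, add_comm]
  rfl
end

section
/- Existence of a piecewise affine optimizer for a right-hand-side parametric linear program: let G be a real p×m matrix, S a real p×n matrix, w ∈ ℝ^p, and c ∈ ℝ^m, and suppose that for every x ∈ ℝ^n the polyhedron U(x) = {u ∈ ℝ^m : G u ≤ w + S x} is nonempty and compact. Then there exists a function u* : ℝ^n → ℝ^m and finitely many affine maps μ₁, …, μ_r : ℝ^n → ℝ^m such that for every x ∈ ℝ^n: u*(x) ∈ U(x), cᵀu*(x) = min{ cᵀu : u ∈ U(x) }, and u*(x) = μ_j(x) for some j ∈ {1, …, r}. -/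
open Matrix Set

noncomputable def lpMu {p m n : ℕ} (G : Matrix (Fin p) (Fin m) ℝ) (S : Matrix (Fin p) (Fin n) ℝ)
    (w : Fin p → ℝ) (σ : Fin m → Fin p) : (Fin n → ℝ) →ᵃ[ℝ] (Fin m → ℝ) where
  toFun x := (G.submatrix σ id)⁻¹.mulVec (fun k => w (σ k) + S.mulVec x (σ k))
  linear := Matrix.mulVecLin ((G.submatrix σ id)⁻¹ * S.submatrix σ id)
  map_vadd' x v := by
    have h1 : (fun k => w (σ k) + S.mulVec (v +ᵥ x) (σ k))
        = (fun k => w (σ k) + S.mulVec x (σ k)) + (S.submatrix σ id).mulVec v := by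
      funext k
      have : S.mulVec (v + x) (σ k) = S.mulVec v (σ k) + S.mulVec x (σ k) := by
        rw [Matrix.mulVec_add]; rfl
      show w (σ k) + S.mulVec (v + x) (σ k) = _
      simp [this, Matrix.mulVec, Matrix.submatrix, Pi.add_apply]
      ring
    show (G.submatrix σ id)⁻¹.mulVec _ = _
    rw [h1, Matrix.mulVec_add]
    show _ = Matrix.mulVec _ v + _
    rw [← Matrix.mulVec_mulVec]
    funext k
    simp [Pi.add_apply, add_comm]


lemma lp_vertex_min {p m : ℕ} (G : Matrix (Fin p) (Fin m) ℝ) (b : Fin p → ℝ) (c : Fin m → ℝ)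
    (hne : {u : Fin m → ℝ | ∀ i, G.mulVec u i ≤ b i}.Nonempty)
    (hcpt : IsCompact {u : Fin m → ℝ | ∀ i, G.mulVec u i ≤ b i}) :
    ∃ (u : Fin m → ℝ) (σ : Fin m → Fin p),
      IsUnit (G.submatrix σ id) ∧
      (∀ i, G.mulVec u i ≤ b i) ∧
      (∀ v : Fin m → ℝ, (∀ i, G.mulVec v i ≤ b i) → ∑ i, c i * u i ≤ ∑ i, c i * v i) ∧
      (∀ k, G.mulVec u (σ k) = b (σ k)) := by
  classical
  set K : Set (Fin m → ℝ) := {u | ∀ i, G.mulVec u i ≤ b i} with hK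
  -- the objective as a linear map
  set f : (Fin m → ℝ) →ₗ[ℝ] ℝ :=
    { toFun := fun u => ∑ i, c i * u i
      map_add' := by intro a b; simp [mul_add, Finset.sum_add_distrib]
      map_smul' := by
        intro r a
        simp only [Pi.smul_apply, smul_eq_mul, RingHom.id_apply, Finset.mul_sum]
        exact Finset.sum_congr rfl fun i _ => by ring } with hf
  have hfc : Continuous f := f.continuous_of_finiteDimensional
  -- a minimizer
  obtain ⟨u0, hu0K, hu0m⟩ := hcpt.exists_isMinOn hne hfc.continuousOn
  have hu0min : ∀ v ∈ K, f u0 ≤ f v := fun v hv => hu0m hv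
  -- the set of minimizers
  set M : Set (Fin m → ℝ) := {u ∈ K | f u ≤ f u0} with hM
  have hKconv : Convex ℝ K := by
    intro u hu v hv a b' ha hb' hab i
    have : G.mulVec (a • u + b' • v) i = a * G.mulVec u i + b' * G.mulVec v i := by
      rw [Matrix.mulVec_add, Matrix.mulVec_smul, Matrix.mulVec_smul]; rfl
    calc G.mulVec (a • u + b' • v) i = a * G.mulVec u i + b' * G.mulVec v i := this
    _ ≤ a * b i + b' * b i := by
        apply add_le_add <;> first
          | exact mul_le_mul_of_nonneg_left (hu i) ha
          | exact mul_le_mul_of_nonneg_left (hv i) hb'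
    _ = b i := by rw [← add_mul, hab, one_mul]
  have hMconv : Convex ℝ M := hKconv.inter (convex_halfSpace_le ⟨f.map_add, f.map_smul⟩ (f u0))
  have hMcl : IsClosed M := (hcpt.isClosed).inter (isClosed_le hfc continuous_const)
  have hMcpt : IsCompact M := hcpt.of_isClosed_subset hMcl Set.inter_subset_left
  have hMne : M.Nonempty := ⟨u0, hu0K, le_rfl⟩
  obtain ⟨u, huext⟩ := hMcpt.extremePoints_nonempty hMne
  rw [mem_extremePoints] at huext
  obtain ⟨⟨huK, hufle⟩, hext⟩ := huext
  have hufu0 : f u = f u0 := le_antisymm hufle (hu0min u huK)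
  have humin : ∀ v ∈ K, f u ≤ f v := fun v hv => hufu0 ▸ hu0min v hv
  -- the active set
  set A : Set (Fin p) := {i | G.mulVec u i = b i} with hA
  -- nondegeneracy of active rows
  have hd : ∀ d : Fin m → ℝ, (∀ i ∈ A, G.mulVec d i = 0) → d = 0 := by
    intro d hdact
    by_contra hd0
    have hlt : ∀ i, i ∉ A → G.mulVec u i < b i := fun i hi => (huK i).lt_of_ne hi
    set g : Fin p → ℝ := fun i =>
      if G.mulVec d i = 0 then 1 else (b i - G.mulVec u i) / (2 * |G.mulVec d i|) with hg
    have hgpos : ∀ i, 0 < g i := by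
      intro i
      rw [hg]; dsimp only
      split_ifs with h
      · norm_num
      · have hiA : i ∉ A := fun hiA => h (hdact i hiA)
        have h1 := hlt i hiA
        have h2 : 0 < |G.mulVec d i| := abs_pos.mpr h
        exact div_pos (by linarith) (by linarith)
    have hex : ∃ ε : ℝ, 0 < ε ∧ ∀ i, ε ≤ g i := by
      rcases isEmpty_or_nonempty (Fin p) with hp | hp
      · exact ⟨1, one_pos, fun i => isEmptyElim i⟩
      · refine ⟨Finset.univ.inf' Finset.univ_nonempty g, ?_, ?_⟩
        · rw [Finset.lt_inf'_iff]; exact fun i _ => hgpos i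
        · exact fun i => Finset.inf'_le g (Finset.mem_univ i)
    obtain ⟨ε, hεpos, hεle⟩ := hex
    have hfeas : ∀ t : ℝ, |t| ≤ ε → (u + t • d) ∈ K := by
      intro t ht i
      have hmul : G.mulVec (u + t • d) i = G.mulVec u i + t * G.mulVec d i := by
        rw [Matrix.mulVec_add, Matrix.mulVec_smul]; rfl
      by_cases h : G.mulVec d i = 0
      · rw [hmul, h]; simpa using huK i
      · have hiA : i ∉ A := fun hiA => h (hdact i hiA)
        have hδ := hlt i hiA
        have habs : 0 < |G.mulVec d i| := abs_pos.mpr h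
        have h1 : |t * G.mulVec d i| ≤ ε * |G.mulVec d i| := by
          rw [abs_mul]; exact mul_le_mul_of_nonneg_right ht (abs_nonneg _)
        have h2 : ε * |G.mulVec d i| ≤ (b i - G.mulVec u i) / 2 := by
          have h3 := hεle i
          rw [hg] at h3; simp only [if_neg h] at h3
          have h4 := (le_div_iff₀ (by positivity : (0:ℝ) < 2 * |G.mulVec d i|)).mp h3
          nlinarith
        have h4 : t * G.mulVec d i ≤ (b i - G.mulVec u i) / 2 :=
          le_trans (le_abs_self _) (h1.trans h2)
        rw [hmul]; linarith
    have hlin : ∀ t : ℝ, f (u + t • d) = f u + t * f d := by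
      intro t; rw [map_add, LinearMap.map_smul]; rfl
    have hfd : f d = 0 := by
      have h1 := humin _ (hfeas ε (by rw [abs_of_pos hεpos]))
      have h2 := humin _ (hfeas (-ε) (by rw [abs_neg, abs_of_pos hεpos]))
      rw [hlin] at h1 h2
      nlinarith
    have hmemM : ∀ t : ℝ, |t| ≤ ε → (u + t • d) ∈ M := by
      intro t ht
      refine ⟨hfeas t ht, ?_⟩
      rw [hlin, hfd, mul_zero, add_zero]; exact hufle
    have hseg : u ∈ openSegment ℝ (u + (-ε) • d) (u + ε • d) := by
      refine ⟨1/2, 1/2, by norm_num, by norm_num, by norm_num, ?_⟩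
      module
    have hcontra := hext _ (hmemM (-ε) (by rw [abs_neg, abs_of_pos hεpos]))
      _ (hmemM ε (by rw [abs_of_pos hεpos])) hseg
    have : ε • d = 0 := by
      have h5 := hcontra.2
      have := add_eq_left.mp h5
      exact this
    rcases smul_eq_zero.mp this with h | h
    · exact absurd h (ne_of_gt hεpos)
    · exact hd0 h
  -- active rows span everything
  have hspan : Submodule.span ℝ (G '' A) = ⊤ := by
    by_contra hs
    set eqv : (Fin m → ℝ) ≃ₗ[ℝ] EuclideanSpace ℝ (Fin m) :=
      (WithLp.linearEquiv 2 ℝ (Fin m → ℝ)).symm with heqv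
    set U : Submodule ℝ (EuclideanSpace ℝ (Fin m)) :=
      Submodule.span ℝ (⇑eqv '' (G '' A)) with hU
    have hUtop : U ≠ ⊤ := by
      intro h
      apply hs
      have h2 : (Submodule.span ℝ (G '' A)).map eqv.toLinearMap = ⊤ := by
        rw [← Submodule.span_image]
        simpa only [LinearEquiv.coe_coe] using h
      rw [eq_top_iff]
      intro v _
      have hv : eqv v ∈ (Submodule.span ℝ (G '' A)).map eqv.toLinearMap := by
        rw [h2]; trivial
      obtain ⟨y, hy, hyv⟩ := hv
      have : y = v := eqv.injective hyv
      rwa [← this]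
    have hUbot : Uᗮ ≠ ⊥ := fun h => hUtop (Submodule.orthogonal_eq_bot_iff.mp h)
    obtain ⟨d, hdmem, hd0⟩ := Submodule.exists_mem_ne_zero_of_ne_bot hUbot
    have hzero : eqv.symm d = 0 := by
      apply hd
      intro i hiA
      have hGiU : eqv (G i) ∈ U := Submodule.subset_span ⟨G i, ⟨i, hiA, rfl⟩, rfl⟩
      have hinner : (inner ℝ (eqv (G i)) d : ℝ) = 0 :=
        (Submodule.mem_orthogonal U d).mp hdmem _ hGiU
      rw [PiLp.inner_apply] at hinner
      simp only [RCLike.inner_apply, conj_trivial] at hinner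
      have : G.mulVec (eqv.symm d) i = ∑ j, eqv (G i) j * d j := by
        simp only [Matrix.mulVec, dotProduct]
        apply Finset.sum_congr rfl
        intro j _
        rfl
      rw [this, ← hinner]; exact Finset.sum_congr rfl fun j _ => mul_comm _ _
    apply hd0
    have := congrArg eqv hzero
    simpa using this
  -- extract a basis of rows
  obtain ⟨bs, hbsub, hbspan, hbli⟩ := exists_linearIndependent ℝ (G '' A)
  rw [hspan] at hbspan
  have hbfin : bs.Finite := hbli.setFinite
  haveI : Fintype bs := hbfin.fintype
  have hcard : Fintype.card bs = m := by
    have B : Module.Basis bs ℝ (Fin m → ℝ) := Module.Basis.mk hbli (by rw [Subtype.range_coe, hbspan])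
    have := Module.finrank_eq_card_basis B
    rw [Module.finrank_fin_fun] at this
    omega
  set e : Fin m ≃ bs := (Fintype.equivFinOfCardEq hcard).symm with he
  have hsel : ∀ k : Fin m, ∃ i : Fin p, i ∈ A ∧ G i = (e k : Fin m → ℝ) :=
    fun k => by
      obtain ⟨i, hiA, hGi⟩ := hbsub (e k).2
      exact ⟨i, hiA, hGi⟩
  choose σ hσA hσG using hsel
  have hrows : (fun k => G.submatrix σ id k) = fun k => (e k : Fin m → ℝ) := by
    funext k; rw [← hσG k]; rfl
  have hli : LinearIndependent ℝ (fun k => G.submatrix σ id k) := by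
    rw [hrows]
    exact hbli.comp e e.injective
  refine ⟨u, σ, Matrix.linearIndependent_rows_iff_isUnit.mp hli, huK, fun v hv => humin v hv,
    fun k => hσA k⟩


/-- Existence of a piecewise affine optimizer for a right-hand-side parametric linear
program: if the polyhedron `U(x) = {u : G u ≤ w + S x}` is nonempty and compact for every
`x`, then there is an optimal solution map `u* : ℝ^n → ℝ^m` and finitely many affine maps
`μ₁, …, μ_r` such that for every `x`, `u*(x)` is feasible, `cᵀ u*(x)` is the minimum of
`cᵀ u` over `U(x)`, and `u*(x) = μ_j(x)` for some `j`. -/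
theorem parametric_lp_pwa_optimizer {p m n : ℕ}
    (G : Matrix (Fin p) (Fin m) ℝ) (S : Matrix (Fin p) (Fin n) ℝ)
    (w : Fin p → ℝ) (c : Fin m → ℝ)
    (hne : ∀ x : Fin n → ℝ,
      {u : Fin m → ℝ | ∀ i, G.mulVec u i ≤ w i + S.mulVec x i}.Nonempty)
    (hcpt : ∀ x : Fin n → ℝ,
      IsCompact {u : Fin m → ℝ | ∀ i, G.mulVec u i ≤ w i + S.mulVec x i}) :
    ∃ (ustar : (Fin n → ℝ) → (Fin m → ℝ)) (r : ℕ)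
      (μ : Fin r → ((Fin n → ℝ) →ᵃ[ℝ] (Fin m → ℝ))),
      ∀ x : Fin n → ℝ,
        ustar x ∈ {u : Fin m → ℝ | ∀ i, G.mulVec u i ≤ w i + S.mulVec x i} ∧
        (∀ u ∈ {u : Fin m → ℝ | ∀ i, G.mulVec u i ≤ w i + S.mulVec x i},
          ∑ i, c i * ustar x i ≤ ∑ i, c i * u i) ∧
        ∃ j : Fin r, ustar x = μ j x := by
  classical
  have H : ∀ x : Fin n → ℝ, ∃ (u : Fin m → ℝ) (σ : Fin m → Fin p),
      IsUnit (G.submatrix σ id) ∧ (∀ i, G.mulVec u i ≤ w i + S.mulVec x i) ∧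
      (∀ v : Fin m → ℝ, (∀ i, G.mulVec v i ≤ w i + S.mulVec x i) →
        ∑ i, c i * u i ≤ ∑ i, c i * v i) ∧
      (∀ k, G.mulVec u (σ k) = w (σ k) + S.mulVec x (σ k)) := by
    intro x
    obtain ⟨u, σ, h1, h2, h3, h4⟩ :=
      lp_vertex_min G (fun i => w i + S.mulVec x i) c (hne x) (hcpt x)
    exact ⟨u, σ, h1, h2, h3, h4⟩
  choose ustar σf hUnit hfeas hmin hact using H
  refine ⟨ustar, Fintype.card (Fin m → Fin p),
    fun j => lpMu G S w ((Fintype.equivFin (Fin m → Fin p)).symm j), fun x => ?_⟩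
  refine ⟨hfeas x, fun v hv => hmin x v hv, ⟨Fintype.equivFin (Fin m → Fin p) (σf x), ?_⟩⟩
  simp only [Equiv.symm_apply_apply]
  have hM : (G.submatrix (σf x) id).mulVec (ustar x) =
      fun k => w (σf x k) + S.mulVec x (σf x k) := by
    funext k
    exact hact x k
  have hdet : IsUnit (G.submatrix (σf x) id).det :=
    (Matrix.isUnit_iff_isUnit_det _).mp (hUnit x)
  show ustar x = (G.submatrix (σf x) id)⁻¹.mulVec (fun k => w (σf x k) + S.mulVec x (σf x k))
  rw [← hM, Matrix.mulVec_mulVec, Matrix.nonsing_inv_mul _ hdet, Matrix.one_mulVec]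
end

section
/- The Bellman optimization step preserves piecewise linearity of the value function (Lemma 1, value part): let g : ℝ^n × ℝ^m → ℝ and V : ℝ^n → ℝ be continuous piecewise affine, let γ ≥ 0, let W be a finite set with probability weights p_w ≥ 0 summing to 1, let f_w : ℝ^n × ℝ^m → ℝ^n be an affine map for each w ∈ W, and let U ⊆ ℝ^m be a nonempty compact polyhedron (a bounded finite intersection of closed half-spaces). Then the function V' : ℝ^n → ℝ defined by V'(x) = max_{u ∈ U} Σ_{w ∈ W} p_w · ( g(x, u) + γ · V(f_w(x, u)) ) is well defined (the maximum is attained) and is continuous piecewise affine. -/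
open Finset

/-- continuity of a finite inf' of continuous functions -/
lemma continuous_finset_inf' {ι X : Type*} [TopologicalSpace X] {s : Finset ι}
    (hs : s.Nonempty) {f : ι → X → ℝ} (hf : ∀ i ∈ s, Continuous (f i)) :
    Continuous fun x => s.inf' hs fun i => f i x := by
  induction hs using Finset.Nonempty.cons_induction with
  | cons i s hi hs ih =>
      have he : (fun x => (Finset.cons i s hi).inf' (Finset.cons_nonempty hi) fun j => f j x)
          = fun x => min (f i x) (s.inf' hs fun j => f j x) := by
        funext x; rw [Finset.inf'_cons]
      rw [he]
      exact (hf i (by simp)).min (ih fun j hj => hf j (by simp [hj]))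
  | singleton i => exact hf i (by simp)

lemma continuous_finset_sup' {ι X : Type*} [TopologicalSpace X] {s : Finset ι}
    (hs : s.Nonempty) {f : ι → X → ℝ} (hf : ∀ i ∈ s, Continuous (f i)) :
    Continuous fun x => s.sup' hs fun i => f i x := by
  induction hs using Finset.Nonempty.cons_induction with
  | cons i s hi hs ih =>
      have he : (fun x => (Finset.cons i s hi).sup' (Finset.cons_nonempty hi) fun j => f j x)
          = fun x => max (f i x) (s.sup' hs fun j => f j x) := by
        funext x; rw [Finset.sup'_cons]
      rw [he]
      exact (hf i (by simp)).max (ih fun j hj => hf j (by simp [hj]))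
  | singleton i => exact hf i (by simp)

/-- row satisfaction for a linear inequality system -/
def rsat {α : Type*} [Fintype α] (y : α → ℝ) (r : (α → ℝ) × ℝ) : Prop :=
  ∑ w, r.1 w * y w ≤ r.2

lemma sum_update {α : Type*} [Fintype α] [DecidableEq α] (a : α → ℝ) (y : α → ℝ)
    (v : α) (s : ℝ) :
    ∑ w, a w * Function.update y v s w = (∑ w, a w * y w) + a v * (s - y v) := by
  classical
  rw [Finset.sum_eq_sum_sdiff_singleton_add (Finset.mem_univ v)
      (fun w => a w * Function.update y v s w),
    Finset.sum_eq_sum_sdiff_singleton_add (Finset.mem_univ v) (fun w => a w * y w)]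
  have : ∀ w ∈ Finset.univ \ {v}, a w * Function.update y v s w = a w * y w := by
    intro w hw
    rw [Function.update_of_ne (by simpa using (Finset.mem_sdiff.1 hw).2)]
  rw [Finset.sum_congr rfl this, Function.update_self]
  ring


theorem elimOne {α : Type*} [Fintype α] [DecidableEq α] (v : α)
    (L : Finset ((α → ℝ) × ℝ)) :
    ∃ L' : Finset ((α → ℝ) × ℝ),
      (∀ r ∈ L', r.1 v = 0) ∧
      (∀ w, (∀ r ∈ L, r.1 w = 0) → ∀ r ∈ L', r.1 w = 0) ∧
      (∀ y : α → ℝ, (∀ r ∈ L', rsat y r) ↔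
        ∃ s : ℝ, ∀ r ∈ L, rsat (Function.update y v s) r) := by
  classical
  set Z := L.filter (fun r => r.1 v = 0) with hZ
  set P := L.filter (fun r => 0 < r.1 v) with hP
  set N := L.filter (fun r => r.1 v < 0) with hN
  set combo : ((α → ℝ) × ℝ) → ((α → ℝ) × ℝ) → ((α → ℝ) × ℝ) :=
    fun p q => ((fun w => (-q.1 v) * p.1 w + p.1 v * q.1 w),
      (-q.1 v) * p.2 + p.1 v * q.2) with hcombo
  have hmemL : ∀ r ∈ L, r ∈ Z ∨ r ∈ P ∨ r ∈ N := by
    intro r hr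
    rcases lt_trichotomy (r.1 v) 0 with h | h | h
    · exact Or.inr (Or.inr (Finset.mem_filter.2 ⟨hr, h⟩))
    · exact Or.inl (Finset.mem_filter.2 ⟨hr, h⟩)
    · exact Or.inr (Or.inl (Finset.mem_filter.2 ⟨hr, h⟩))
  refine ⟨Z ∪ (P ×ˢ N).image (fun pq => combo pq.1 pq.2), ?_, ?_, ?_⟩
  · intro r hr
    rcases Finset.mem_union.1 hr with h | h
    · exact (Finset.mem_filter.1 h).2
    · rcases Finset.mem_image.1 h with ⟨pq, _, rfl⟩
      simp [hcombo]; ring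
  · intro w hw r hr
    rcases Finset.mem_union.1 hr with h | h
    · exact hw r (Finset.mem_filter.1 h).1
    · rcases Finset.mem_image.1 h with ⟨pq, hpq, rfl⟩
      rcases Finset.mem_product.1 hpq with ⟨hp, hn⟩
      simp [hcombo, hw _ (Finset.mem_filter.1 hp).1, hw _ (Finset.mem_filter.1 hn).1]
  · intro y
    have hup : ∀ (s : ℝ) (r : (α → ℝ) × ℝ),
        rsat (Function.update y v s) r ↔
          (∑ w, r.1 w * y w) - r.1 v * y v + r.1 v * s ≤ r.2 := by
      intro s r
      unfold rsat
      rw [sum_update]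
      constructor <;> intro h <;> linarith
    have hsumc : ∀ p q : ((α → ℝ) × ℝ),
        (∑ w, (combo p q).1 w * y w)
          = (-q.1 v) * (∑ w, p.1 w * y w) + p.1 v * (∑ w, q.1 w * y w) := by
      intro p q
      simp only [hcombo, Finset.mul_sum]
      rw [← Finset.sum_add_distrib]
      exact Finset.sum_congr rfl (fun w _ => by ring)
    set ub : ((α → ℝ) × ℝ) → ℝ :=
      fun r => (r.2 - ((∑ w, r.1 w * y w) - r.1 v * y v)) / r.1 v with hub
    have hubP : ∀ r ∈ P, ub r * r.1 v = r.2 - ((∑ w, r.1 w * y w) - r.1 v * y v) := by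
      intro r hr
      exact div_mul_cancel₀ _ (ne_of_gt (Finset.mem_filter.1 hr).2)
    have hubN : ∀ r ∈ N, ub r * r.1 v = r.2 - ((∑ w, r.1 w * y w) - r.1 v * y v) := by
      intro r hr
      exact div_mul_cancel₀ _ (ne_of_lt (Finset.mem_filter.1 hr).2)
    constructor
    · intro hsat
      have key : ∀ p ∈ P, ∀ q ∈ N, ub q ≤ ub p := by
        intro p hp q hq
        have hpv : 0 < p.1 v := (Finset.mem_filter.1 hp).2
        have hqv : q.1 v < 0 := (Finset.mem_filter.1 hq).2
        have hc := hsat (combo p q) (Finset.mem_union_right _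
          (Finset.mem_image.2 ⟨(p, q), Finset.mem_product.2 ⟨hp, hq⟩, rfl⟩))
        unfold rsat at hc
        rw [hsumc p q] at hc
        have hc2 : (combo p q).2 = (-q.1 v) * p.2 + p.1 v * q.2 := rfl
        rw [hc2] at hc
        have h1 := hubP p hp
        have h2 := hubN q hq
        nlinarith [mul_pos hpv (neg_pos.2 hqv)]
      set s : ℝ := if hPne : P.Nonempty then P.inf' hPne ub
        else if hNne : N.Nonempty then N.sup' hNne ub else 0 with hs
      refine ⟨s, ?_⟩
      intro r hr
      rw [hup]
      rcases hmemL r hr with h | h | h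
      · have h0 : r.1 v = 0 := (Finset.mem_filter.1 h).2
        have hy := hsat r (Finset.mem_union_left _ h)
        unfold rsat at hy
        rw [h0]
        linarith
      · have hPne : P.Nonempty := ⟨r, h⟩
        have hsle : s ≤ ub r := by
          rw [hs, dif_pos hPne]
          exact Finset.inf'_le _ h
        have hrv : 0 < r.1 v := (Finset.mem_filter.1 h).2
        have h1 := hubP r h
        nlinarith
      · have hrv : r.1 v < 0 := (Finset.mem_filter.1 h).2
        have hsge : ub r ≤ s := by
          by_cases hPne : P.Nonempty
          · rw [hs, dif_pos hPne]
            exact Finset.le_inf' _ _ (fun p hp => key p hp r h)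
          · have hNne : N.Nonempty := ⟨r, h⟩
            rw [hs, dif_neg hPne, dif_pos hNne]
            exact Finset.le_sup' _ h
        have h1 := hubN r h
        nlinarith
    · rintro ⟨s, hsat⟩ r hr
      rcases Finset.mem_union.1 hr with h | h
      · have h0 : r.1 v = 0 := (Finset.mem_filter.1 h).2
        have hy := (hup s r).1 (hsat r (Finset.mem_filter.1 h).1)
        unfold rsat
        rw [h0] at hy
        linarith
      · rcases Finset.mem_image.1 h with ⟨⟨p, q⟩, hpq, rfl⟩
        rcases Finset.mem_product.1 hpq with ⟨hp, hq⟩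
        have hpv : 0 < p.1 v := (Finset.mem_filter.1 hp).2
        have hqv : q.1 v < 0 := (Finset.mem_filter.1 hq).2
        have h1 := (hup s p).1 (hsat p (Finset.mem_filter.1 hp).1)
        have h2 := (hup s q).1 (hsat q (Finset.mem_filter.1 hq).1)
        unfold rsat
        rw [hsumc p q]
        have hc2 : ((combo p q).2 : ℝ) = (-q.1 v) * p.2 + p.1 v * q.2 := rfl
        rw [hc2]
        nlinarith [mul_pos hpv (neg_pos.2 hqv),
          mul_le_mul_of_nonneg_left h1 (le_of_lt (neg_pos.2 hqv)),
          mul_le_mul_of_nonneg_left h2 (le_of_lt hpv)]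


theorem multiElim {α : Type*} [Fintype α] [DecidableEq α] (S : Finset α)
    (L : Finset ((α → ℝ) × ℝ)) :
    ∃ L' : Finset ((α → ℝ) × ℝ),
      (∀ r ∈ L', ∀ v ∈ S, r.1 v = 0) ∧
      (∀ y : α → ℝ, (∀ r ∈ L', rsat y r) ↔
        ∃ z : α → ℝ, (∀ w, w ∉ S → z w = y w) ∧ ∀ r ∈ L, rsat z r) := by
  classical
  -- strengthen with preservation of zero columns
  suffices h : ∃ L' : Finset ((α → ℝ) × ℝ),
      (∀ r ∈ L', ∀ v ∈ S, r.1 v = 0) ∧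
      (∀ w, (∀ r ∈ L, r.1 w = 0) → ∀ r ∈ L', r.1 w = 0) ∧
      (∀ y : α → ℝ, (∀ r ∈ L', rsat y r) ↔
        ∃ z : α → ℝ, (∀ w, w ∉ S → z w = y w) ∧ ∀ r ∈ L, rsat z r) by
    obtain ⟨L', h1, _, h3⟩ := h
    exact ⟨L', h1, h3⟩
  induction S using Finset.induction_on generalizing L with
  | empty =>
      refine ⟨L, by simp, fun w hw => hw, fun y => ⟨fun h => ⟨y, fun _ _ => rfl, h⟩, ?_⟩⟩
      rintro ⟨z, hz, hsat⟩
      have : z = y := funext fun w => hz w (by simp)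
      rwa [this] at hsat
  | @insert v S hv ih =>
      obtain ⟨L0, hz0, hpres0, hsem0⟩ := elimOne v L
      obtain ⟨L1, hz1, hpres1, hsem1⟩ := ih L0
      refine ⟨L1, ?_, ?_, ?_⟩
      · intro r hr w hw
        rcases Finset.mem_insert.1 hw with rfl | hw
        · exact hpres1 w (fun r' hr' => hz0 r' hr') r hr
        · exact hz1 r hr w hw
      · intro w hw
        exact hpres1 w (hpres0 w hw)
      · intro y
        rw [hsem1 y]
        constructor
        · rintro ⟨z, hzy, hzs⟩
          obtain ⟨s, hs⟩ := (hsem0 z).1 hzs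
          refine ⟨Function.update z v s, ?_, hs⟩
          intro w hw
          have hwv : w ≠ v := fun h => hw (h ▸ Finset.mem_insert_self v S)
          have hwS : w ∉ S := fun h => hw (Finset.mem_insert_of_mem h)
          rw [Function.update_of_ne hwv]
          exact hzy w hwS
        · rintro ⟨z', hz'y, hz's⟩
          refine ⟨Function.update z' v (y v), ?_, ?_⟩
          · intro w hw
            by_cases hwv : w = v
            · subst hwv; rw [Function.update_self]
            · rw [Function.update_of_ne hwv]
              exact hz'y w (fun h => hw (Finset.mem_of_mem_insert_of_ne h hwv))
          · rw [hsem0]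
            refine ⟨z' v, ?_⟩
            rw [Function.update_idem, Function.update_eq_self]
            exact hz's



open Set Filter Topology

/-- 1-D key lemma: a continuous selection from finitely many affine functions on [0,1]
admits an index whose line lies above f at 0 and below f at 1. -/
lemma oneD {ι : Type*} [Fintype ι] (f : ℝ → ℝ) (hf : Continuous f)
    (s e : ι → ℝ) (sel : ∀ t ∈ Set.Icc (0:ℝ) 1, ∃ i, f t = s i * t + e i) :
    ∃ i, f 0 ≤ e i ∧ s i * 1 + e i ≤ f 1 := by
  classical
  set D : Set ℝ := {t ∈ Set.Icc (0:ℝ) 1 | ∃ i, f 0 ≤ e i ∧ s i * t + e i ≤ f t} with hD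
  have hDclosed : IsClosed D := by
    have : D = ⋃ i, {t ∈ Set.Icc (0:ℝ) 1 | f 0 ≤ e i ∧ s i * t + e i ≤ f t} := by
      ext t; simp only [hD, Set.mem_setOf_eq, Set.mem_iUnion]; tauto
    rw [this]
    refine isClosed_iUnion_of_finite fun i => ?_
    by_cases hi : f 0 ≤ e i
    · have : {t ∈ Set.Icc (0:ℝ) 1 | f 0 ≤ e i ∧ s i * t + e i ≤ f t}
          = Set.Icc (0:ℝ) 1 ∩ {t | s i * t + e i ≤ f t} := by
        ext t; simp [hi]
      rw [this]
      exact isClosed_Icc.inter (isClosed_le (by continuity) hf)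
    · have : {t ∈ Set.Icc (0:ℝ) 1 | f 0 ≤ e i ∧ s i * t + e i ≤ f t} = ∅ := by
        ext t; simp [hi]
      rw [this]; exact isClosed_empty
  have h0D : (0:ℝ) ∈ D := by
    obtain ⟨i, hi⟩ := sel 0 (by norm_num)
    exact ⟨by norm_num, i, by simp at hi; simp [hi], by simp at hi; simp [hi]⟩
  have hDbdd : BddAbove D := ⟨1, fun t ht => ht.1.2⟩
  have hDne : D.Nonempty := ⟨0, h0D⟩
  set c := sSup D with hc
  have hcD : c ∈ D := hDclosed.csSup_mem hDne hDbdd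
  obtain ⟨⟨hc0, hc1⟩, j, hj0, hjc⟩ := hcD
  by_cases hcone : c = 1
  · exact ⟨j, hj0, by rw [← hcone]; simpa using hjc⟩
  have hclt : c < 1 := lt_of_le_of_ne hc1 hcone
  -- beyond c, every good line is strictly above f
  have hgt : ∀ t, c < t → t ≤ 1 → ∀ i, f 0 ≤ e i → f t < s i * t + e i := by
    intro t hct ht1 i hi
    by_contra hle
    push_neg at hle
    have : t ∈ D := ⟨⟨le_trans hc0 (le_of_lt hct), ht1⟩, i, hi, hle⟩
    exact absurd (le_csSup hDbdd this) (not_le.2 hct)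
  -- filter at c from the right within (c,1]
  have hne : (𝓝[Set.Ioc c 1] c).NeBot := left_nhdsWithin_Ioc_neBot hclt
  -- pigeonhole: some line agrees with f frequently to the right of c
  have hev : ∀ᶠ t in 𝓝[Set.Ioc c 1] c, ∃ i, f t = s i * t + e i := by
    filter_upwards [self_mem_nhdsWithin] with t ht
    exact sel t ⟨le_trans hc0 (le_of_lt ht.1), ht.2⟩
  have hfreq : ∃ k, ∃ᶠ t in 𝓝[Set.Ioc c 1] c, f t = s k * t + e k := by
    by_contra hcon
    push_neg at hcon
    have hall : ∀ᶠ t in 𝓝[Set.Ioc c 1] c, ∀ i, ¬ f t = s i * t + e i :=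
      Filter.eventually_all.2 hcon
    obtain ⟨t, ht1, ht2⟩ := (hall.and hev).exists
    obtain ⟨i, hi⟩ := ht2
    exact ht1 i hi
  obtain ⟨k, hk⟩ := hfreq
  -- f c = line k at c
  have hkc : f c = s k * c + e k := by
    have hcl : c ∈ closure {t | f t = s k * t + e k} := by
      rw [mem_closure_iff_frequently]
      exact (hk.filter_mono nhdsWithin_le_nhds)
    have : IsClosed {t | f t = s k * t + e k} := isClosed_eq hf (by continuity)
    exact this.closure_subset hcl
  -- line j also touches f at c
  have hjc' : s j * c + e j = f c := by
    refine le_antisymm hjc ?_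
    have hev2 : ∀ᶠ t in 𝓝[Set.Ioc c 1] c, f t ≤ s j * t + e j := by
      filter_upwards [self_mem_nhdsWithin] with t ht
      exact le_of_lt (hgt t ht.1 ht.2 j hj0)
    have h1 : Filter.Tendsto f (𝓝[Set.Ioc c 1] c) (𝓝 (f c)) :=
      (hf.tendsto c).mono_left nhdsWithin_le_nhds
    have h2 : Filter.Tendsto (fun t => s j * t + e j) (𝓝[Set.Ioc c 1] c)
        (𝓝 (s j * c + e j)) := by
      exact ((continuous_const.mul continuous_id).add continuous_const |>.tendsto c)
        |>.mono_left nhdsWithin_le_nhds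
    exact le_of_tendsto_of_tendsto h1 h2 hev2
  -- a point strictly beyond c where f agrees with line k
  obtain ⟨t₁, ht₁m, ht₁⟩ : ∃ t₁, t₁ ∈ Set.Ioc c 1 ∧ f t₁ = s k * t₁ + e k := by
    have := (hk.and_eventually self_mem_nhdsWithin).exists
    obtain ⟨t₁, h1, h2⟩ := this
    exact ⟨t₁, h2, h1⟩
  by_cases hk0 : f 0 ≤ e k
  · exact absurd ht₁.symm.le (not_le.2 (hgt t₁ ht₁m.1 ht₁m.2 k hk0))
  push_neg at hk0
  -- slope comparison contradiction
  have hek : e k < e j := lt_of_lt_of_le hk0 hj0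
  have heq : s k * c + e k = s j * c + e j := by rw [← hkc, hjc']
  have hcpos : 0 < c := by
    rcases lt_or_eq_of_le hc0 with h | h
    · exact h
    · exfalso; rw [← h] at heq; simp at heq; linarith
  have hlin : s j * t₁ + e j < s k * t₁ + e k := by nlinarith [ht₁m.1]
  have := hgt t₁ ht₁m.1 ht₁m.2 j hj0
  linarith [ht₁ ▸ this]


/-- multi-dimensional key lemma -/
lemma keyLemma {E ι : Type*} [NormedAddCommGroup E] [NormedSpace ℝ E] [Fintype ι]
    (F : E → ℝ) (hF : Continuous F) (L : ι → E → ℝ)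
    (hL : ∀ i (z d : E) (t : ℝ), L i (z + t • d) = L i z + t * (L i (z + d) - L i z))
    (sel : ∀ p, ∃ i, F p = L i p) (z x : E) :
    ∃ i, F z ≤ L i z ∧ L i x ≤ F x := by
  set γ : ℝ → E := fun t => z + t • (x - z) with hγ
  have hγc : Continuous γ := by continuity
  have hγ0 : γ 0 = z := by simp [hγ]
  have hγ1 : γ 1 = x := by simp [hγ]
  have hline : ∀ i t, L i (γ t) = (L i x - L i z) * t + L i z := by
    intro i t
    have := hL i z (x - z) t
    rw [hγ]
    simp only [this]
    have : z + (x - z) = x := by abel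
    rw [this]
    ring
  obtain ⟨i, h1, h2⟩ := oneD (f := fun t => F (γ t)) (hF.comp hγc)
    (fun i => L i x - L i z) (fun i => L i z)
    (fun t _ => by
      obtain ⟨i, hi⟩ := sel (γ t)
      exact ⟨i, by show F (γ t) = _; rw [hi, hline]⟩)
  refine ⟨i, ?_, ?_⟩
  · simpa [hγ0] using h1
  · have h2' : (L i x - L i z) * 1 + L i z ≤ F (γ 1) := h2
    rw [hγ1] at h2'
    linarith



open Finset

lemma lpLemma {n m : ℕ} {κ : Type*} [Fintype κ] [Nonempty κ]
    {q : ℕ} {A : Fin q → Fin m → ℝ} {b : Fin q → ℝ}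
    (hne : {u : Fin m → ℝ | ∀ i, (∑ j, A i j * u j) ≤ b i}.Nonempty)
    (hcpt : IsCompact {u : Fin m → ℝ | ∀ i, (∑ j, A i j * u j) ≤ b i})
    (α : κ → Fin n → ℝ) (β : κ → Fin m → ℝ) (c : κ → ℝ) :
    ∃ (G : Finset ((Fin n → ℝ) × ℝ)) (hG : G.Nonempty),
      ∀ x : Fin n → ℝ,
        IsGreatest {t : ℝ | ∃ u : Fin m → ℝ, (∀ i, (∑ j, A i j * u j) ≤ b i) ∧
            ∀ i : κ, t ≤ (∑ l, α i l * x l) + (∑ j, β i j * u j) + c i}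
          (G.inf' hG fun gg => (∑ l, gg.1 l * x l) + gg.2) := by
  classical
  set T : (Fin n → ℝ) → Set ℝ := fun x =>
    {t : ℝ | ∃ u : Fin m → ℝ, (∀ i, (∑ j, A i j * u j) ≤ b i) ∧
      ∀ i : κ, t ≤ (∑ l, α i l * x l) + (∑ j, β i j * u j) + c i} with hT
  -- variable space
  set enc : (Fin n → ℝ) → (Fin m → ℝ) → ℝ → (Option (Fin n ⊕ Fin m) → ℝ) :=
    fun x u t o => o.elim t (Sum.elim x u) with henc
  set rowA : Fin q → ((Option (Fin n ⊕ Fin m) → ℝ) × ℝ) :=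
    fun i => (fun o => o.elim 0 (Sum.elim (fun _ => (0:ℝ)) (A i)), b i) with hrowA
  set rowK : κ → ((Option (Fin n ⊕ Fin m) → ℝ) × ℝ) :=
    fun i => (fun o => o.elim 1 (Sum.elim (fun l => -(α i l)) (fun j => -(β i j))), c i)
    with hrowK
  set L : Finset ((Option (Fin n ⊕ Fin m) → ℝ) × ℝ) :=
    (Finset.univ.image rowA) ∪ (Finset.univ.image rowK) with hL
  have hsatA : ∀ (i : Fin q) x u t, rsat (enc x u t) (rowA i) ↔ (∑ j, A i j * u j) ≤ b i := by
    intro i x u t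
    unfold rsat
    rw [Fintype.sum_option]
    rw [Fintype.sum_sum_type]
    simp [hrowA, henc]
  have hsatK : ∀ (i : κ) x u t, rsat (enc x u t) (rowK i) ↔
      t ≤ (∑ l, α i l * x l) + (∑ j, β i j * u j) + c i := by
    intro i x u t
    unfold rsat
    rw [Fintype.sum_option, Fintype.sum_sum_type]
    simp only [hrowK, henc, Option.elim, Sum.elim_inl, Sum.elim_inr, one_mul, neg_mul]
    rw [Finset.sum_neg_distrib, Finset.sum_neg_distrib]
    constructor <;> intro h <;> linarith
  have hsatL : ∀ x u t, (∀ r ∈ L, rsat (enc x u t) r) ↔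
      ((∀ i, (∑ j, A i j * u j) ≤ b i) ∧
        ∀ i : κ, t ≤ (∑ l, α i l * x l) + (∑ j, β i j * u j) + c i) := by
    intro x u t
    constructor
    · intro h
      constructor
      · intro i
        exact (hsatA i x u t).1 (h _ (Finset.mem_union_left _
          (Finset.mem_image.2 ⟨i, Finset.mem_univ i, rfl⟩)))
      · intro i
        exact (hsatK i x u t).1 (h _ (Finset.mem_union_right _
          (Finset.mem_image.2 ⟨i, Finset.mem_univ i, rfl⟩)))
    · rintro ⟨h1, h2⟩ r hr
      rcases Finset.mem_union.1 hr with h | h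
      · rcases Finset.mem_image.1 h with ⟨i, _, rfl⟩
        exact (hsatA i x u t).2 (h1 i)
      · rcases Finset.mem_image.1 h with ⟨i, _, rfl⟩
        exact (hsatK i x u t).2 (h2 i)
  set S : Finset (Option (Fin n ⊕ Fin m)) :=
    Finset.univ.image (fun j : Fin m => (some (Sum.inr j))) with hS
  obtain ⟨L', hz, hsem⟩ := multiElim S L
  -- row value on encoded points
  set tc : ((Option (Fin n ⊕ Fin m) → ℝ) × ℝ) → ℝ := fun r => r.1 none with htc
  set xs : ((Option (Fin n ⊕ Fin m) → ℝ) × ℝ) → (Fin n → ℝ) → ℝ :=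
    fun r x => ∑ l, r.1 (some (Sum.inl l)) * x l with hxs
  have hrv : ∀ r ∈ L', ∀ x u t, (∑ w, r.1 w * enc x u t w) = tc r * t + xs r x := by
    intro r hr x u t
    rw [Fintype.sum_option, Fintype.sum_sum_type]
    have hz' : ∀ j : Fin m, r.1 (some (Sum.inr j)) = 0 := fun j =>
      hz r hr _ (Finset.mem_image.2 ⟨j, Finset.mem_univ j, rfl⟩)
    simp [henc, htc, hxs, hz']
  -- the T set via the projected system
  have hTiff : ∀ x t, t ∈ T x ↔ ∀ r ∈ L', tc r * t + xs r x ≤ r.2 := by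
    intro x t
    have := hsem (enc x 0 t)
    constructor
    · rintro ⟨u, hu1, hu2⟩ r hr
      have hsatL' : ∀ r ∈ L', rsat (enc x 0 t) r := by
        rw [this]
        refine ⟨enc x u t, ?_, (hsatL x u t).2 ⟨hu1, hu2⟩⟩
        intro w hw
        match w with
        | none => rfl
        | some (Sum.inl l) => rfl
        | some (Sum.inr j) =>
            exact absurd (Finset.mem_image.2 ⟨j, Finset.mem_univ j, rfl⟩) hw
      have := hsatL' r hr
      unfold rsat at this
      rwa [hrv r hr x 0 t] at this
    · intro h
      have hsatL' : ∀ r ∈ L', rsat (enc x 0 t) r := by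
        intro r hr
        unfold rsat
        rw [hrv r hr x 0 t]
        exact h r hr
      rw [this] at hsatL'
      obtain ⟨z, hzy, hzsat⟩ := hsatL'
      set u' : Fin m → ℝ := fun j => z (some (Sum.inr j)) with hu'
      have hzenc : z = enc x u' t := by
        funext o
        match o with
        | none => exact hzy none (by simp [hS])
        | some (Sum.inl l) => exact hzy _ (by simp [hS])
        | some (Sum.inr j) => rfl
      rw [hzenc] at hzsat
      obtain ⟨h1, h2⟩ := (hsatL x u' t).1 hzsat
      exact ⟨u', h1, h2⟩
  -- nonemptiness of T x
  obtain ⟨u₀, hu₀⟩ := id hne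
  have hκne : (Finset.univ : Finset κ).Nonempty := Finset.univ_nonempty
  set t₀ : (Fin n → ℝ) → ℝ := fun x => Finset.univ.inf' hκne
    (fun i : κ => (∑ l, α i l * x l) + (∑ j, β i j * u₀ j) + c i) with ht₀
  have ht₀T : ∀ x, t₀ x ∈ T x := by
    intro x
    exact ⟨u₀, hu₀, fun i => Finset.inf'_le _ (Finset.mem_univ i)⟩
  -- downward closedness
  have hdc : ∀ x (t t' : ℝ), t' ≤ t → t ∈ T x → t' ∈ T x := by
    rintro x t t' hle ⟨u, h1, h2⟩
    exact ⟨u, h1, fun i => le_trans hle (h2 i)⟩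
  -- bounded above
  have hbdd : ∀ x : Fin n → ℝ, ∃ B, ∀ t ∈ T x, t ≤ B := by
    intro x
    set φ : (Fin m → ℝ) → ℝ := fun u => Finset.univ.inf' hκne
      (fun i : κ => (∑ l, α i l * x l) + (∑ j, β i j * u j) + c i) with hφ
    have hcont : Continuous φ := by
      refine continuous_finset_inf' hκne (fun i _ => ?_)
      exact (continuous_const.add (continuous_finset_sum _
        (fun j _ => continuous_const.mul (continuous_apply j)))).add continuous_const
    obtain ⟨uB, hUB, hmax⟩ := hcpt.exists_isMaxOn hne hcont.continuousOn
    refine ⟨φ uB, ?_⟩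
    rintro t ⟨u, h1, h2⟩
    have h3 : t ≤ φ u := Finset.le_inf' _ _ (fun i _ => h2 i)
    exact le_trans h3 (hmax h1)
  -- fact 1 : all t coefficients are nonnegative
  have hF1 : ∀ r ∈ L', 0 ≤ tc r := by
    intro r hr
    by_contra hneg
    push_neg at hneg
    set t' : ℝ := min (t₀ 0) ((r.2 - xs r 0) / tc r - 1) with ht'
    have ht'T : t' ∈ T 0 := hdc 0 (t₀ 0) t' (min_le_left _ _) (ht₀T 0)
    have hs := (hTiff 0 t').1 ht'T r hr
    have h2 : t' ≤ (r.2 - xs r 0) / tc r - 1 := min_le_right _ _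
    have h3 : ((r.2 - xs r 0) / tc r) * tc r = r.2 - xs r 0 :=
      div_mul_cancel₀ _ (ne_of_lt hneg)
    nlinarith
  -- fact 2 : some positive t coefficient
  set J : Finset ((Option (Fin n ⊕ Fin m) → ℝ) × ℝ) :=
    L'.filter (fun r => 0 < tc r) with hJ
  have hJsub : ∀ r ∈ J, r ∈ L' := fun r hr => (Finset.mem_filter.1 hr).1
  have hJne : J.Nonempty := by
    by_contra hJe
    have hzero : ∀ r ∈ L', tc r = 0 := by
      intro r hr
      rcases lt_or_eq_of_le (hF1 r hr) with h | h
      · exact absurd ⟨r, Finset.mem_filter.2 ⟨hr, h⟩⟩ hJe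
      · exact h.symm
    obtain ⟨B, hB⟩ := hbdd 0
    have : B + 1 ∈ T 0 := by
      rw [hTiff]
      intro r hr
      have := (hTiff 0 (t₀ 0)).1 (ht₀T 0) r hr
      rw [hzero r hr] at this ⊢
      linarith
    linarith [hB _ this]
  -- the optimal value
  set wval : (Fin n → ℝ) → ℝ := fun x => J.inf' hJne (fun r => (r.2 - xs r x) / tc r)
    with hwval
  have hwgreat : ∀ x, IsGreatest (T x) (wval x) := by
    intro x
    constructor
    · rw [hTiff]
      intro r hr
      by_cases hrJ : r ∈ J
      · have h1 : wval x ≤ (r.2 - xs r x) / tc r := Finset.inf'_le _ hrJ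
        have hpos : 0 < tc r := (Finset.mem_filter.1 hrJ).2
        have h3 : ((r.2 - xs r x) / tc r) * tc r = r.2 - xs r x :=
          div_mul_cancel₀ _ (ne_of_gt hpos)
        nlinarith
      · have h0 : tc r = 0 := by
          rcases lt_or_eq_of_le (hF1 r hr) with h | h
          · exact absurd (Finset.mem_filter.2 ⟨hr, h⟩) hrJ
          · exact h.symm
        have := (hTiff x (t₀ x)).1 (ht₀T x) r hr
        rw [h0] at this ⊢
        linarith
    · intro t ht
      refine Finset.le_inf' _ _ (fun r hr => ?_)
      have hpos : 0 < tc r := (Finset.mem_filter.1 hr).2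
      have hs := (hTiff x t).1 ht r (hJsub r hr)
      rw [le_div_iff₀ hpos]
      linarith
  -- package into affine pairs
  set imf : ((Option (Fin n ⊕ Fin m) → ℝ) × ℝ) → ((Fin n → ℝ) × ℝ) :=
    fun r => ((fun l => -(r.1 (some (Sum.inl l))) / tc r), r.2 / tc r) with himf
  refine ⟨J.image imf, hJne.image _, fun x => ?_⟩
  have hval : ∀ h : (J.image imf).Nonempty,
      ((J.image imf).inf' h fun gg => (∑ l, gg.1 l * x l) + gg.2) = wval x := by
    intro h
    rw [Finset.inf'_image]
    refine Finset.inf'_congr _ rfl (fun r hr => ?_)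
    show (∑ l, (-(r.1 (some (Sum.inl l))) / tc r) * x l) + r.2 / tc r
        = (r.2 - xs r x) / tc r
    have h3 : (∑ l, (-(r.1 (some (Sum.inl l))) / tc r) * x l)
        = -((∑ l, r.1 (some (Sum.inl l)) * x l) / tc r) := by
      simp only [div_mul_eq_mul_div, neg_mul, neg_div, Finset.sum_neg_distrib,
        ← Finset.sum_div]
    rw [h3]
    have e : xs r x = ∑ l, r.1 (some (Sum.inl l)) * x l := rfl
    rw [e, sub_div]
    ring
  rw [hval]
  exact hwgreat x



open Finset

variable {n m : ℕ}

/-- coefficient form of functions on the product space -/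
def AffForm (h : ((Fin n → ℝ) × (Fin m → ℝ)) → ℝ) : Prop :=
  ∃ (av : Fin n → ℝ) (bv : Fin m → ℝ) (cv : ℝ),
    ∀ pr : (Fin n → ℝ) × (Fin m → ℝ),
      h pr = (∑ l, av l * pr.1 l) + (∑ j, bv j * pr.2 j) + cv

lemma affForm_const (c : ℝ) : AffForm (n := n) (m := m) (fun _ => c) :=
  ⟨0, 0, c, fun pr => by simp⟩

lemma affForm_add {h₁ h₂ : ((Fin n → ℝ) × (Fin m → ℝ)) → ℝ}
    (H1 : AffForm h₁) (H2 : AffForm h₂) : AffForm (fun pr => h₁ pr + h₂ pr) := by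
  obtain ⟨a1, b1, c1, e1⟩ := H1
  obtain ⟨a2, b2, c2, e2⟩ := H2
  refine ⟨a1 + a2, b1 + b2, c1 + c2, fun pr => ?_⟩
  dsimp only
  rw [e1, e2]
  simp only [Pi.add_apply, add_mul]
  rw [Finset.sum_add_distrib, Finset.sum_add_distrib]
  ring

lemma affForm_smul {h : ((Fin n → ℝ) × (Fin m → ℝ)) → ℝ} (t : ℝ)
    (H : AffForm h) : AffForm (fun pr => t * h pr) := by
  obtain ⟨a1, b1, c1, e1⟩ := H
  refine ⟨fun l => t * a1 l, fun j => t * b1 j, t * c1, fun pr => ?_⟩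
  dsimp only
  rw [e1]
  rw [mul_add, mul_add, Finset.mul_sum, Finset.mul_sum]
  congr 1
  · congr 1
    · exact Finset.sum_congr rfl fun l _ => by ring
    · exact Finset.sum_congr rfl fun j _ => by ring

lemma affForm_sum {W : Type*} [Fintype W] {h : W → ((Fin n → ℝ) × (Fin m → ℝ)) → ℝ}
    (H : ∀ w, AffForm (h w)) : AffForm (fun pr => ∑ w, h w pr) := by
  classical
  choose av bv cv e using H
  refine ⟨fun l => ∑ w, av w l, fun j => ∑ w, bv w j, ∑ w, cv w, fun pr => ?_⟩
  dsimp only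
  rw [Finset.sum_congr rfl (fun w _ => e w pr)]
  rw [Finset.sum_add_distrib, Finset.sum_add_distrib]
  congr 1
  · congr 1
    · rw [Finset.sum_comm]
      exact Finset.sum_congr rfl fun l _ => by rw [Finset.sum_mul]
    · rw [Finset.sum_comm]
      exact Finset.sum_congr rfl fun j _ => by rw [Finset.sum_mul]

/-- expansion of a linear map on the product of pi types, coordinatewise -/
lemma linear_expand (ψ : ((Fin n → ℝ) × (Fin m → ℝ)) →ₗ[ℝ] ℝ)
    (pr : (Fin n → ℝ) × (Fin m → ℝ)) :
    ψ pr = (∑ l, pr.1 l * ψ (Pi.single l 1, 0)) + ∑ j, pr.2 j * ψ (0, Pi.single j 1) := by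
  classical
  have hsplit : pr = (pr.1, 0) + (0, pr.2) := by simp
  have h1 : (pr.1, (0 : Fin m → ℝ)) = ∑ l, pr.1 l • ((Pi.single l 1 : Fin n → ℝ), (0 : Fin m → ℝ)) := by
    rw [Prod.ext_iff]
    constructor
    · simp only [Prod.fst_sum, Prod.smul_mk]
      funext k
      rw [Finset.sum_apply]
      simp only [Pi.smul_apply, Pi.single_apply, smul_eq_mul]
      rw [Finset.sum_eq_single k (fun l _ hl => by simp [Ne.symm hl]) (by simp)]
      simp
    · simp only [Prod.snd_sum, Prod.smul_mk]
      simp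
  have h2 : ((0 : Fin n → ℝ), pr.2) = ∑ j, pr.2 j • ((0 : Fin n → ℝ), (Pi.single j 1 : Fin m → ℝ)) := by
    rw [Prod.ext_iff]
    constructor
    · simp only [Prod.fst_sum, Prod.smul_mk]
      simp
    · simp only [Prod.snd_sum, Prod.smul_mk]
      funext k
      rw [Finset.sum_apply]
      simp only [Pi.smul_apply, Pi.single_apply, smul_eq_mul]
      rw [Finset.sum_eq_single k (fun l _ hl => by simp [Ne.symm hl]) (by simp)]
      simp
  calc ψ pr = ψ ((pr.1, 0) + (0, pr.2)) := by rw [← hsplit]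
    _ = ψ (pr.1, 0) + ψ (0, pr.2) := map_add _ _ _
    _ = _ := by
        rw [h1, h2, map_sum, map_sum]
        congr 1
        · exact Finset.sum_congr rfl fun l _ => by rw [map_smul]; simp
        · exact Finset.sum_congr rfl fun j _ => by rw [map_smul]; simp

/-- coefficient form of an affine coordinate function -/
lemma affForm_affineCoord (φ : ((Fin n → ℝ) × (Fin m → ℝ)) →ᵃ[ℝ] (Fin n → ℝ)) (k : Fin n) :
    AffForm (fun pr => φ pr k) := by
  have hdec : ∀ pr, φ pr k = φ.linear pr k + φ 0 k := by
    intro pr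
    rw [AffineMap.decomp φ]
    simp
  set ψ : ((Fin n → ℝ) × (Fin m → ℝ)) →ₗ[ℝ] ℝ :=
    (LinearMap.proj k).comp φ.linear with hψ
  have hψval : ∀ pr, φ.linear pr k = ψ pr := fun pr => rfl
  refine ⟨fun l => ψ (Pi.single l 1, 0), fun j => ψ (0, Pi.single j 1), φ 0 k, fun pr => ?_⟩
  dsimp only
  rw [hdec, hψval, linear_expand ψ pr]
  congr 1
  · congr 1
    · exact Finset.sum_congr rfl fun l _ => by ring
    · exact Finset.sum_congr rfl fun j _ => by ring

/-- affinity along segments from coefficient form -/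
lemma affForm_line {h : ((Fin n → ℝ) × (Fin m → ℝ)) → ℝ} (H : AffForm h)
    (z d : (Fin n → ℝ) × (Fin m → ℝ)) (t : ℝ) :
    h (z + t • d) = h z + t * (h (z + d) - h z) := by
  obtain ⟨a1, b1, c1, e1⟩ := H
  have key : ∀ (av : Fin n → ℝ) (y y' : Fin n → ℝ) (t : ℝ),
      (∑ l, av l * (y l + t * y' l)) = (∑ l, av l * y l) + t * ∑ l, av l * y' l := by
    intro av y y' t
    rw [Finset.mul_sum, ← Finset.sum_add_distrib]
    exact Finset.sum_congr rfl fun l _ => by ring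
  have key2 : ∀ (bv : Fin m → ℝ) (y y' : Fin m → ℝ) (t : ℝ),
      (∑ j, bv j * (y j + t * y' j)) = (∑ j, bv j * y j) + t * ∑ j, bv j * y' j := by
    intro bv y y' t
    rw [Finset.mul_sum, ← Finset.sum_add_distrib]
    exact Finset.sum_congr rfl fun j _ => by ring
  have ha : ∀ (t : ℝ), h (z + t • d) = (∑ l, a1 l * (z.1 l + t * d.1 l))
      + (∑ j, b1 j * (z.2 j + t * d.2 j)) + c1 := by
    intro t
    rw [e1]
    rfl
  have h1 := ha t
  have h2 := ha 1
  rw [h1, key, key2, e1]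
  have h2' : h (z + d) = (∑ l, a1 l * (z.1 l + 1 * d.1 l))
      + (∑ j, b1 j * (z.2 j + 1 * d.2 j)) + c1 := by
    have := ha 1
    rwa [one_smul] at this
  rw [h2', key, key2]
  ring



/-- A function `g : ℝ^n × ℝ^m → ℝ` is continuous piecewise affine if it is continuous and
there are finitely many affine functions `gᵢ(x, u) = ⟨aᵢ, x⟩ + ⟨bᵢ, u⟩ + cᵢ` such that for
every `(x, u)`, `g x u` equals `gᵢ (x, u)` for some `i`. -/
def IsCPWA2 {n m : ℕ} (g : (Fin n → ℝ) → (Fin m → ℝ) → ℝ) : Prop :=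
  Continuous (fun p : (Fin n → ℝ) × (Fin m → ℝ) => g p.1 p.2) ∧
  ∃ (r : ℕ) (a : Fin r → Fin n → ℝ) (b : Fin r → Fin m → ℝ) (c : Fin r → ℝ),
    ∀ (x : Fin n → ℝ) (u : Fin m → ℝ), ∃ i : Fin r,
      g x u = (∑ j, a i j * x j) + (∑ j, b i j * u j) + c i

/-- Lemma 1, value part: the Bellman optimization step preserves piecewise linearity.
With a continuous piecewise affine stage cost `g`, a continuous piecewise affine value
function `V`, discount `γ ≥ 0`, a finitely supported disturbance `w ∈ W` with
probabilities `p w` and affine dynamics `f w`, and a nonempty compact polyhedral feasible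
set `U = {u | ∀ i, ⟨A i, u⟩ ≤ b i}`, the function
`V'(x) = max_{u ∈ U} Σ_w p w · (g(x,u) + γ · V(f_w(x,u)))` is well defined (the maximum
is attained at every `x`) and continuous piecewise affine. -/
theorem bellman_step_isCPWA {n m : ℕ}
    (g : (Fin n → ℝ) → (Fin m → ℝ) → ℝ) (V : (Fin n → ℝ) → ℝ) (γ : ℝ)
    (hg : IsCPWA2 g) (hV : IsCPWA V) (hγ : 0 ≤ γ)
    (W : Type) [Fintype W] (p : W → ℝ) (hp : ∀ w, 0 ≤ p w) (hpsum : ∑ w, p w = 1)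
    (f : W → (((Fin n → ℝ) × (Fin m → ℝ)) →ᵃ[ℝ] (Fin n → ℝ)))
    (q : ℕ) (A : Fin q → Fin m → ℝ) (b : Fin q → ℝ)
    (hne : {u : Fin m → ℝ | ∀ i, (∑ j, A i j * u j) ≤ b i}.Nonempty)
    (hcpt : IsCompact {u : Fin m → ℝ | ∀ i, (∑ j, A i j * u j) ≤ b i}) :
    ∃ V' : (Fin n → ℝ) → ℝ,
      (∀ x : Fin n → ℝ, IsGreatest
        ((fun u : Fin m → ℝ => ∑ w, p w * (g x u + γ * V (f w (x, u)))) ''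
          {u : Fin m → ℝ | ∀ i, (∑ j, A i j * u j) ≤ b i}) (V' x)) ∧
      IsCPWA V' := by
  classical
  obtain ⟨hgc, r₁, a₁, b₁, c₁, hgsel⟩ := hg
  obtain ⟨hVc, r₂, a₂, c₂, hVsel⟩ := hV
  set Φ : ((Fin n → ℝ) × (Fin m → ℝ)) → ℝ :=
    fun pr => ∑ w, p w * (g pr.1 pr.2 + γ * V (f w pr)) with hΦ
  have hΦc : Continuous Φ := by
    refine continuous_finset_sum _ (fun w _ => ?_)
    refine continuous_const.mul ?_
    refine hgc.add (continuous_const.mul ?_)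
    exact hVc.comp (f w).continuous_of_finiteDimensional
  have hΦeq : ∀ pr, Φ pr = g pr.1 pr.2 + γ * ∑ w, p w * V (f w pr) := by
    intro pr
    rw [hΦ]
    dsimp only
    rw [Finset.sum_congr rfl
      (fun w _ => (by ring : p w * (g pr.1 pr.2 + γ * V (f w pr))
        = g pr.1 pr.2 * p w + γ * (p w * V (f w pr))))]
    rw [Finset.sum_add_distrib, ← Finset.mul_sum, ← Finset.mul_sum, hpsum, mul_one]
  -- affine pieces of Φ
  set 𝕃 : (Fin r₁ × (W → Fin r₂)) → ((Fin n → ℝ) × (Fin m → ℝ)) → ℝ := fun i pr =>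
    ((∑ l, a₁ i.1 l * pr.1 l) + (∑ j, b₁ i.1 j * pr.2 j) + c₁ i.1)
    + γ * ∑ w, p w * ((∑ k, a₂ (i.2 w) k * f w pr k) + c₂ (i.2 w)) with h𝕃
  have hsel : ∀ pr, ∃ i, Φ pr = 𝕃 i pr := by
    intro pr
    obtain ⟨i₀, hi₀⟩ := hgsel pr.1 pr.2
    choose jw hjw using fun w => hVsel (f w pr)
    refine ⟨(i₀, jw), ?_⟩
    rw [hΦeq pr, h𝕃]
    dsimp only
    rw [hi₀]
    congr 2
    exact Finset.sum_congr rfl fun w _ => by rw [hjw w]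
  have hform : ∀ i, AffForm (𝕃 i) := by
    intro i
    have base : ∀ (w : W) (k : Fin n), AffForm (fun pr => a₂ (i.2 w) k * f w pr k) :=
      fun w k => affForm_smul _ (affForm_affineCoord (f w) k)
    have hsumk : ∀ w : W, AffForm (fun pr => ∑ k, a₂ (i.2 w) k * f w pr k) :=
      fun w => affForm_sum (base w)
    have hw : ∀ w : W, AffForm
        (fun pr => p w * ((∑ k, a₂ (i.2 w) k * f w pr k) + c₂ (i.2 w))) :=
      fun w => affForm_smul _ (affForm_add (hsumk w) (affForm_const _))
    have hS : AffForm
        (fun pr => ∑ w, p w * ((∑ k, a₂ (i.2 w) k * f w pr k) + c₂ (i.2 w))) :=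
      affForm_sum hw
    have hP : AffForm (fun pr : (Fin n → ℝ) × (Fin m → ℝ) =>
        (∑ l, a₁ i.1 l * pr.1 l) + (∑ j, b₁ i.1 j * pr.2 j) + c₁ i.1) :=
      ⟨a₁ i.1, b₁ i.1, c₁ i.1, fun pr => rfl⟩
    exact affForm_add hP (affForm_smul γ hS)
  choose av bv cv hcoefs using hform
  have hlineP : ∀ i (z d : (Fin n → ℝ) × (Fin m → ℝ)) (t : ℝ),
      𝕃 i (z + t • d) = 𝕃 i z + t * (𝕃 i (z + d) - 𝕃 i z) :=
    fun i z d t => affForm_line ⟨av i, bv i, cv i, hcoefs i⟩ z d t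
  set Sfin : ((Fin n → ℝ) × (Fin m → ℝ)) → Finset (Fin r₁ × (W → Fin r₂)) :=
    fun z => Finset.univ.filter (fun i => Φ z ≤ 𝕃 i z) with hSfin
  have hSne : ∀ z, (Sfin z).Nonempty := fun z => by
    obtain ⟨i, hi⟩ := hsel z
    exact ⟨i, Finset.mem_filter.2 ⟨Finset.mem_univ i, le_of_eq hi⟩⟩
  set 𝒮 : Finset (Finset (Fin r₁ × (W → Fin r₂))) :=
    Finset.univ.filter (fun σ => ∃ z, σ = Sfin z) with h𝒮
  have h𝒮ne : 𝒮.Nonempty :=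
    ⟨Sfin (0, 0), Finset.mem_filter.2 ⟨Finset.mem_univ _, ⟨(0, 0), rfl⟩⟩⟩
  have hlp : ∀ σ : {s // s ∈ 𝒮}, ∃ (G : Finset ((Fin n → ℝ) × ℝ)) (hG : G.Nonempty),
      ∀ x : Fin n → ℝ, IsGreatest {t : ℝ | ∃ u : Fin m → ℝ,
          (∀ i, (∑ j, A i j * u j) ≤ b i) ∧
          ∀ i : {i : Fin r₁ × (W → Fin r₂) // i ∈ σ.1},
            t ≤ (∑ l, av i.1 l * x l) + (∑ j, bv i.1 j * u j) + cv i.1}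
        (G.inf' hG fun gg => (∑ l, gg.1 l * x l) + gg.2) := by
    intro σ
    obtain ⟨z, hz⟩ := (Finset.mem_filter.1 σ.2).2
    haveI : Nonempty {i : Fin r₁ × (W → Fin r₂) // i ∈ σ.1} := by
      obtain ⟨i, hi⟩ := hSne z
      exact ⟨⟨i, hz ▸ hi⟩⟩
    exact lpLemma hne hcpt _ _ _
  choose G hG hGr using hlp
  have hattne : 𝒮.attach.Nonempty := Finset.attach_nonempty_iff.2 h𝒮ne
  set V' : (Fin n → ℝ) → ℝ := fun x =>
    𝒮.attach.sup' hattne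
      (fun σ => (G σ).inf' (hG σ) (fun gg => (∑ l, gg.1 l * x l) + gg.2)) with hV'
  have hub : ∀ (x : Fin n → ℝ) (u : Fin m → ℝ),
      (∀ i, (∑ j, A i j * u j) ≤ b i) → Φ (x, u) ≤ V' x := by
    intro x u hu
    set σ₀ : {s // s ∈ 𝒮} :=
      ⟨Sfin (x, u), Finset.mem_filter.2 ⟨Finset.mem_univ _, ⟨(x, u), rfl⟩⟩⟩ with hσ₀
    have hmem : Φ (x, u) ∈ {t : ℝ | ∃ u' : Fin m → ℝ,
        (∀ i, (∑ j, A i j * u' j) ≤ b i) ∧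
        ∀ i : {i : Fin r₁ × (W → Fin r₂) // i ∈ σ₀.1},
          t ≤ (∑ l, av i.1 l * x l) + (∑ j, bv i.1 j * u' j) + cv i.1} := by
      refine ⟨u, hu, fun i => ?_⟩
      have h1 : Φ (x, u) ≤ 𝕃 i.1 (x, u) := (Finset.mem_filter.1 i.2).2
      rwa [hcoefs i.1 (x, u)] at h1
    have h3 := (hGr σ₀ x).2 hmem
    exact le_trans h3 (Finset.le_sup'
      (fun σ => (G σ).inf' (hG σ) (fun gg => (∑ l, gg.1 l * x l) + gg.2))
      (Finset.mem_attach _ σ₀))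
  refine ⟨V', fun x => ?_, ?_, ?_⟩
  · constructor
    · -- membership : the maximum is attained
      obtain ⟨σS, hσS, hmax⟩ := Finset.exists_mem_eq_sup' hattne
        (fun σ : {s // s ∈ 𝒮} =>
          (G σ).inf' (hG σ) (fun gg => (∑ l, gg.1 l * x l) + gg.2))
      obtain ⟨u, hu, hwub⟩ := (hGr σS x).1
      obtain ⟨z, hz⟩ := (Finset.mem_filter.1 σS.2).2
      obtain ⟨i, hi1, hi2⟩ := keyLemma Φ hΦc 𝕃 hlineP hsel z (x, u)
      have hiσ : i ∈ σS.1 := by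
        rw [hz]
        exact Finset.mem_filter.2 ⟨Finset.mem_univ _, hi1⟩
      have h4 : (G σS).inf' (hG σS) (fun gg => (∑ l, gg.1 l * x l) + gg.2)
          ≤ 𝕃 i (x, u) := by
        have := hwub ⟨i, hiσ⟩
        rwa [← hcoefs i (x, u)] at this
      have h5 : V' x ≤ Φ (x, u) := by
        rw [hV']
        dsimp only
        rw [hmax]
        exact le_trans h4 hi2
      have h6 : Φ (x, u) ≤ V' x := hub x u hu
      exact ⟨u, hu, le_antisymm h6 h5⟩
    · rintro t ⟨u, hu, rfl⟩
      exact hub x u hu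
  · -- continuity
    rw [hV']
    refine continuous_finset_sup' _ (fun σ _ => ?_)
    refine continuous_finset_inf' _ (fun gg _ => ?_)
    exact (continuous_finset_sum _
      (fun l _ => continuous_const.mul (continuous_apply l))).add continuous_const
  · -- finitely many affine pieces
    set Gall := 𝒮.attach.biUnion (fun σ => G σ) with hGall
    have hsel' : ∀ x, ∃ gg ∈ Gall, V' x = (∑ l, gg.1 l * x l) + gg.2 := by
      intro x
      obtain ⟨σS, hσS, hmax⟩ := Finset.exists_mem_eq_sup' hattne
        (fun σ : {s // s ∈ 𝒮} =>
          (G σ).inf' (hG σ) (fun gg => (∑ l, gg.1 l * x l) + gg.2))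
      obtain ⟨gg, hgg, hminv⟩ := Finset.exists_mem_eq_inf' (hG σS)
        (fun gg : (Fin n → ℝ) × ℝ => (∑ l, gg.1 l * x l) + gg.2)
      refine ⟨gg, Finset.mem_biUnion.2 ⟨σS, Finset.mem_attach _ _, hgg⟩, ?_⟩
      rw [hV']
      dsimp only
      rw [hmax, hminv]
    refine ⟨Gall.card, fun i => (↑(Gall.equivFin.symm i) : (Fin n → ℝ) × ℝ).1,
      fun i => (↑(Gall.equivFin.symm i) : (Fin n → ℝ) × ℝ).2, fun x => ?_⟩
    obtain ⟨gg, hgg, heq⟩ := hsel' x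
    refine ⟨Gall.equivFin ⟨gg, hgg⟩, ?_⟩
    have e : Gall.equivFin.symm (Gall.equivFin ⟨gg, hgg⟩) = ⟨gg, hgg⟩ :=
      Equiv.symm_apply_apply _ _
    dsimp only
    rw [e]
    exact heq
end

section
/- Existence of a piecewise affine optimal policy (Lemma 1, policy part): under the same assumptions — g : ℝ^n × ℝ^m → ℝ and V : ℝ^n → ℝ continuous piecewise affine, γ ≥ 0, W a finite set with probability weights p_w ≥ 0 summing to 1, f_w : ℝ^n × ℝ^m → ℝ^n affine for each w ∈ W, and U ⊆ ℝ^m a nonempty compact polyhedron — there exists a function μ : ℝ^n → ℝ^m and finitely many affine maps μ₁, …, μ_r : ℝ^n → ℝ^m such that for every x ∈ ℝ^n: μ(x) ∈ U, the objective Σ_{w ∈ W} p_w · ( g(x, μ(x)) + γ · V(f_w(x, μ(x))) ) equals max_{u ∈ U} Σ_{w ∈ W} p_w · ( g(x, u) + γ · V(f_w(x, u)) ), and μ(x) = μ_j(x) for some j ∈ {1, …, r}. In other words, when the value function is piecewise linear, an optimal policy can be chosen piecewise linear. -/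
open Matrix Filter

section Helpers

variable {m q : ℕ} {K : Type*} [Fintype K]

lemma dot_add_smul {m : ℕ} (L v d : Fin m → ℝ) (t : ℝ) :
    L ⬝ᵥ (v + t • d) = L ⬝ᵥ v + t * (L ⬝ᵥ d) := by
  simp [dotProduct_add, dotProduct_smul, smul_eq_mul]

lemma local_slope (val : K → ℝ) (β : K → Fin m → ℝ)
    (Jx : (Fin m → ℝ) → ℝ) (hJc : Continuous Jx)
    (hJp : ∀ u, ∃ k, Jx u = val k + β k ⬝ᵥ u)
    (A : Fin q → Fin m → ℝ) (b : Fin q → ℝ)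
    (v d : Fin m → ℝ) (hv : ∀ i, A i ⬝ᵥ v ≤ b i)
    (hd1 : ∀ i, A i ⬝ᵥ v = b i → A i ⬝ᵥ d = 0)
    (hd2 : ∀ k l : K, val k + β k ⬝ᵥ v = Jx v → val l + β l ⬝ᵥ v = Jx v →
      (β k) ⬝ᵥ d = (β l) ⬝ᵥ d) :
    ∃ s : ℝ, ∃ ε > (0:ℝ), ∀ t : ℝ, |t| ≤ ε →
      ((∀ i, A i ⬝ᵥ (v + t • d) ≤ b i) ∧ Jx (v + t • d) = Jx v + t * s) := by
  obtain ⟨k0, hk0⟩ := hJp v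
  refine ⟨β k0 ⬝ᵥ d, ?_⟩
  have hcont : Continuous fun t : ℝ => v + t • d := by continuity
  have hJt : Continuous fun t : ℝ => Jx (v + t • d) := hJc.comp hcont
  -- eventually: bad pieces stay bad
  have E1 : ∀ᶠ t in nhds (0:ℝ), ∀ k : K, val k + β k ⬝ᵥ v ≠ Jx v →
      Jx (v + t • d) ≠ val k + β k ⬝ᵥ (v + t • d) := by
    rw [eventually_all]
    intro k
    by_cases hk : val k + β k ⬝ᵥ v = Jx v
    · exact Eventually.of_forall fun t h => absurd hk h
    · have hF : ContinuousAt
          (fun t : ℝ => Jx (v + t • d) - (val k + (β k ⬝ᵥ v + t * (β k ⬝ᵥ d)))) 0 := by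
        apply Continuous.continuousAt
        fun_prop
      have h0 : (fun t : ℝ => Jx (v + t • d) - (val k + (β k ⬝ᵥ v + t * (β k ⬝ᵥ d)))) 0 ≠ 0 := by
        simp only [zero_smul, add_zero, zero_mul, mul_zero]
        exact sub_ne_zero_of_ne (Ne.symm hk)
      filter_upwards [hF.eventually_ne h0] with t ht
      intro _ heq
      apply ht
      rw [heq, dot_add_smul]
      ring
  -- eventually: inactive constraints stay strict
  have E2 : ∀ᶠ t in nhds (0:ℝ), ∀ i, A i ⬝ᵥ v ≠ b i → A i ⬝ᵥ (v + t • d) < b i := by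
    rw [eventually_all]
    intro i
    by_cases hi : A i ⬝ᵥ v = b i
    · exact Eventually.of_forall fun t h => absurd hi h
    · have hlt : A i ⬝ᵥ v < b i := lt_of_le_of_ne (hv i) hi
      have hF : ContinuousAt (fun t : ℝ => A i ⬝ᵥ v + t * (A i ⬝ᵥ d)) 0 := by
        apply Continuous.continuousAt; fun_prop
      have h0 : (fun t : ℝ => A i ⬝ᵥ v + t * (A i ⬝ᵥ d)) 0 < b i := by simpa using hlt
      filter_upwards [hF (Iio_mem_nhds h0)] with t ht _
      rwa [dot_add_smul]
  obtain ⟨ε, hε, hball⟩ := Metric.eventually_nhds_iff_ball.mp (E1.and E2)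
  refine ⟨ε / 2, by linarith, fun t ht => ?_⟩
  have htb : t ∈ Metric.ball (0:ℝ) ε := by
    simp only [Metric.mem_ball, Real.dist_eq, sub_zero]
    have : |t| ≤ ε / 2 := ht
    linarith
  obtain ⟨h1, h2⟩ := hball t htb
  constructor
  · intro i
    by_cases hi : A i ⬝ᵥ v = b i
    · rw [dot_add_smul, hi, hd1 i hi, mul_zero, add_zero]
    · exact le_of_lt (h2 i hi)
  · obtain ⟨k, hk⟩ := hJp (v + t • d)
    have hkK : val k + β k ⬝ᵥ v = Jx v := by
      by_contra hbad
      exact (h1 k hbad) hk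
    rw [hk, dot_add_smul, hd2 k k0 hkK hk0.symm, ← add_assoc, hkK]

lemma local_const (val : K → ℝ) (β : K → Fin m → ℝ)
    (Jx : (Fin m → ℝ) → ℝ) (hJc : Continuous Jx)
    (hJp : ∀ u, ∃ k, Jx u = val k + β k ⬝ᵥ u)
    (A : Fin q → Fin m → ℝ) (b : Fin q → ℝ)
    (v d : Fin m → ℝ) (hv : ∀ i, A i ⬝ᵥ v ≤ b i)
    (hmax : ∀ u, (∀ i, A i ⬝ᵥ u ≤ b i) → Jx u ≤ Jx v)
    (hd1 : ∀ i, A i ⬝ᵥ v = b i → A i ⬝ᵥ d = 0)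
    (hd2 : ∀ k l : K, val k + β k ⬝ᵥ v = Jx v → val l + β l ⬝ᵥ v = Jx v →
      (β k) ⬝ᵥ d = (β l) ⬝ᵥ d) :
    ∃ ε > (0:ℝ), ∀ t : ℝ, |t| ≤ ε →
      ((∀ i, A i ⬝ᵥ (v + t • d) ≤ b i) ∧ Jx (v + t • d) = Jx v) := by
  obtain ⟨s, ε, hε, h⟩ := local_slope val β Jx hJc hJp A b v d hv hd1 hd2
  have habs : |ε| ≤ ε := by rw [abs_of_pos hε]
  have habs' : |(-ε)| ≤ ε := by rw [abs_neg, abs_of_pos hε]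
  have h1 := h ε habs
  have h2 := h (-ε) habs'
  have hs1 : Jx v + ε * s ≤ Jx v := h1.2 ▸ hmax _ h1.1
  have hs2 : Jx v + (-ε) * s ≤ Jx v := h2.2 ▸ hmax _ h2.1
  have hs : s = 0 := by nlinarith
  exact ⟨ε, hε, fun t ht => ⟨(h t ht).1, by rw [(h t ht).2, hs, mul_zero, add_zero]⟩⟩

/-- combined constraint system -/
def Lvec (A : Fin q → Fin m → ℝ) (β : K → Fin m → ℝ) : (Fin q ⊕ K × K) → Fin m → ℝ :=
  Sum.elim A fun kl => β kl.1 - β kl.2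

def rhsv (b : Fin q → ℝ) (val : K → ℝ) : (Fin q ⊕ K × K) → ℝ :=
  Sum.elim b fun kl => val kl.2 - val kl.1

lemma hd_of_act (val : K → ℝ) (β : K → Fin m → ℝ) (Jx : (Fin m → ℝ) → ℝ)
    (A : Fin q → Fin m → ℝ) (b : Fin q → ℝ) (v d : Fin m → ℝ)
    (hdact : ∀ c, Lvec A β c ⬝ᵥ v = rhsv b val c → Lvec A β c ⬝ᵥ d = 0) :
    (∀ i, A i ⬝ᵥ v = b i → A i ⬝ᵥ d = 0) ∧
    (∀ k l : K, val k + β k ⬝ᵥ v = Jx v → val l + β l ⬝ᵥ v = Jx v →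
      (β k) ⬝ᵥ d = (β l) ⬝ᵥ d) := by
  constructor
  · intro i hi
    exact hdact (Sum.inl i) hi
  · intro k l hk hl
    have hact : Lvec A β (Sum.inr (k, l)) ⬝ᵥ v = rhsv b val (Sum.inr (k, l)) := by
      simp only [Lvec, rhsv, Sum.elim_inr, sub_dotProduct]
      have : val k + β k ⬝ᵥ v = val l + β l ⬝ᵥ v := by rw [hk, hl]
      linarith
    have := hdact _ hact
    simp only [Lvec, Sum.elim_inr, sub_dotProduct] at this
    linarith

lemma descent (val : K → ℝ) (β : K → Fin m → ℝ)
    (Jx : (Fin m → ℝ) → ℝ) (hJc : Continuous Jx)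
    (hJp : ∀ u, ∃ k, Jx u = val k + β k ⬝ᵥ u)
    (A : Fin q → Fin m → ℝ) (b : Fin q → ℝ)
    (hcpt : IsCompact {u : Fin m → ℝ | ∀ i, A i ⬝ᵥ u ≤ b i})
    (u d : Fin m → ℝ) (hu : ∀ i, A i ⬝ᵥ u ≤ b i)
    (hmax : ∀ u'', (∀ i, A i ⬝ᵥ u'' ≤ b i) → Jx u'' ≤ Jx u)
    (hdact : ∀ c, Lvec A β c ⬝ᵥ u = rhsv b val c → Lvec A β c ⬝ᵥ d = 0)
    (hd0 : d ≠ 0) :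
    ∃ u', (∀ i, A i ⬝ᵥ u' ≤ b i) ∧ Jx u' = Jx u ∧
      (∀ c, Lvec A β c ⬝ᵥ u = rhsv b val c → Lvec A β c ⬝ᵥ u' = rhsv b val c) ∧
      ∃ c, Lvec A β c ⬝ᵥ u' = rhsv b val c ∧ Lvec A β c ⬝ᵥ d ≠ 0 := by
  classical
  set S : Set ℝ := {t : ℝ | 0 ≤ t ∧ ∀ t', 0 ≤ t' → t' ≤ t →
    ((∀ i, A i ⬝ᵥ (u + t' • d) ≤ b i) ∧ Jx (u + t' • d) = Jx u)} with hS
  have h0S : (0:ℝ) ∈ S := by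
    refine ⟨le_refl 0, fun t' h1 h2 => ?_⟩
    have : t' = 0 := le_antisymm h2 h1
    subst this
    simp only [zero_smul, add_zero]
    exact ⟨hu, trivial⟩
  have hSne : S.Nonempty := ⟨0, h0S⟩
  -- bounded above
  have hdn : (0:ℝ) < ‖d‖ := norm_pos_iff.mpr hd0
  obtain ⟨R, hR⟩ := hcpt.isBounded.subset_closedBall (0 : Fin m → ℝ)
  have hbdd : BddAbove S := by
    refine ⟨(R + ‖u‖) / ‖d‖, fun t ht => ?_⟩
    have hfeas := (ht.2 t ht.1 le_rfl).1
    have hmem : u + t • d ∈ Metric.closedBall (0 : Fin m → ℝ) R := hR hfeas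
    rw [Metric.mem_closedBall, dist_zero_right] at hmem
    have : t * ‖d‖ = ‖t • d‖ := by
      rw [norm_smul, Real.norm_eq_abs, abs_of_nonneg ht.1]
    have h2 : ‖t • d‖ ≤ R + ‖u‖ := by
      have h3 : ‖(u + t • d) - u‖ ≤ ‖u + t • d‖ + ‖u‖ := norm_sub_le _ _
      simp only [add_sub_cancel_left] at h3
      linarith
    rw [le_div_iff₀ hdn]
    linarith
  set T := sSup S with hT
  have hT0 : 0 ≤ T := le_csSup hbdd h0S
  have hTS : T ∈ S := by
    constructor
    · exact hT0
    · intro t' h1 h2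
      rcases lt_or_eq_of_le h2 with hlt | heq
      · obtain ⟨t, htS, htt⟩ := exists_lt_of_lt_csSup hSne hlt
        exact htS.2 t' h1 (le_of_lt htt)
      · subst heq
        rcases eq_or_lt_of_le h1 with h10 | h10
        · rw [← h10]
          simpa using h0S.2 0 le_rfl le_rfl
        · -- t' = T > 0, use closedness
          have hclosed : IsClosed {t : ℝ | (∀ i, A i ⬝ᵥ (u + t • d) ≤ b i) ∧
              Jx (u + t • d) = Jx u} := by
            have hA : IsClosed {t : ℝ | ∀ i, A i ⬝ᵥ (u + t • d) ≤ b i} := by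
              rw [Set.setOf_forall]
              refine isClosed_iInter fun i => isClosed_le ?_ continuous_const
              simp only [dot_add_smul]
              fun_prop
            have hB : IsClosed {t : ℝ | Jx (u + t • d) = Jx u} :=
              isClosed_eq (hJc.comp (by fun_prop)) continuous_const
            exact hA.inter hB
          have hsub : Set.Ico (0:ℝ) T ⊆ {t : ℝ | (∀ i, A i ⬝ᵥ (u + t • d) ≤ b i) ∧
              Jx (u + t • d) = Jx u} := by
            intro τ hτ
            obtain ⟨t, htS, htt⟩ := exists_lt_of_lt_csSup hSne hτ.2
            exact htS.2 τ hτ.1 (le_of_lt htt)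
          have hmem : T ∈ closure (Set.Ico (0:ℝ) T) := by
            rw [closure_Ico (ne_of_lt h10)]
            exact ⟨h1, le_rfl⟩
          exact (hclosed.closure_subset_iff.mpr hsub) hmem
  set u' := u + T • d with hu'
  have hfeas' : ∀ i, A i ⬝ᵥ u' ≤ b i := (hTS.2 T hT0 le_rfl).1
  have hval' : Jx u' = Jx u := (hTS.2 T hT0 le_rfl).2
  have hcontain : ∀ c, Lvec A β c ⬝ᵥ u = rhsv b val c →
      Lvec A β c ⬝ᵥ u' = rhsv b val c := by
    intro c hc
    rw [hu', dot_add_smul, hc, hdact c hc, mul_zero, add_zero]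
  refine ⟨u', hfeas', hval', hcontain, ?_⟩
  by_contra hall
  push_neg at hall
  have hall' : ∀ c, Lvec A β c ⬝ᵥ u' = rhsv b val c → Lvec A β c ⬝ᵥ d = 0 := hall
  have hmax' : ∀ u'', (∀ i, A i ⬝ᵥ u'' ≤ b i) → Jx u'' ≤ Jx u' := by
    intro u'' h
    rw [hval']
    exact hmax u'' h
  obtain ⟨hd1', hd2'⟩ := hd_of_act val β Jx A b u' d hall'
  obtain ⟨ε, hε, hloc⟩ := local_const val β Jx hJc hJp A b u' d hfeas' hmax' hd1' hd2'
  have hTεS : T + ε ∈ S := by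
    refine ⟨by linarith, fun t' h1 h2 => ?_⟩
    rcases le_or_gt t' T with hle | hgt
    · exact hTS.2 t' h1 hle
    · have hτ : u + t' • d = u' + (t' - T) • d := by
        rw [hu']
        rw [add_assoc, ← add_smul]
        ring_nf
      have habs : |t' - T| ≤ ε := by
        rw [abs_of_pos (by linarith)]
        linarith
      have := hloc (t' - T) habs
      rw [hτ]
      exact ⟨this.1, by rw [this.2, hval']⟩
  have : T + ε ≤ T := le_csSup hbdd hTεS
  linarith

lemma lemA (val : K → ℝ) (β : K → Fin m → ℝ)
    (Jx : (Fin m → ℝ) → ℝ) (hJc : Continuous Jx)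
    (hJp : ∀ u, ∃ k, Jx u = val k + β k ⬝ᵥ u)
    (A : Fin q → Fin m → ℝ) (b : Fin q → ℝ)
    (hne : ∃ u : Fin m → ℝ, ∀ i, A i ⬝ᵥ u ≤ b i)
    (hcpt : IsCompact {u : Fin m → ℝ | ∀ i, A i ⬝ᵥ u ≤ b i}) :
    ∃ u : Fin m → ℝ, (∀ i, A i ⬝ᵥ u ≤ b i) ∧
      (∀ u'', (∀ i, A i ⬝ᵥ u'' ≤ b i) → Jx u'' ≤ Jx u) ∧
      ∀ d, (∀ c, Lvec A β c ⬝ᵥ u = rhsv b val c → Lvec A β c ⬝ᵥ d = 0) → d = 0 := by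
  classical
  obtain ⟨u₀, hu₀, hmax₀⟩ := hcpt.exists_isMaxOn hne (hJc.continuousOn)
  set Act : (Fin m → ℝ) → Finset (Fin q ⊕ K × K) :=
    fun u => Finset.univ.filter (fun c => Lvec A β c ⬝ᵥ u = rhsv b val c) with hAct
  have key : ∀ N : ℕ, ∀ u : Fin m → ℝ, (∀ i, A i ⬝ᵥ u ≤ b i) →
      (∀ u'', (∀ i, A i ⬝ᵥ u'' ≤ b i) → Jx u'' ≤ Jx u) →
      Fintype.card (Fin q ⊕ K × K) ≤ N + (Act u).card →
      ∃ u : Fin m → ℝ, (∀ i, A i ⬝ᵥ u ≤ b i) ∧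
        (∀ u'', (∀ i, A i ⬝ᵥ u'' ≤ b i) → Jx u'' ≤ Jx u) ∧
        ∀ d, (∀ c, Lvec A β c ⬝ᵥ u = rhsv b val c → Lvec A β c ⬝ᵥ d = 0) → d = 0 := by
    intro N
    induction N with
    | zero =>
      intro u hu hmax hcard
      by_cases hdone : ∀ d, (∀ c, Lvec A β c ⬝ᵥ u = rhsv b val c → Lvec A β c ⬝ᵥ d = 0) → d = 0
      · exact ⟨u, hu, hmax, hdone⟩
      · push_neg at hdone
        obtain ⟨d, hdact, hd0⟩ := hdone
        obtain ⟨u', hu', hval', hcontain, c, hc, hcd⟩ :=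
          descent val β Jx hJc hJp A b hcpt u d hu hmax hdact hd0
        exfalso
        have hcAct : c ∈ Act u := by
          have : (Act u).card = Fintype.card (Fin q ⊕ K × K) :=
            le_antisymm (Finset.card_le_univ _) (by simpa using hcard)
          have : Act u = Finset.univ := Finset.eq_univ_of_card _ this
          rw [this]; exact Finset.mem_univ c
        rw [hAct, Finset.mem_filter] at hcAct
        exact hcd (hdact c hcAct.2)
    | succ N ih =>
      intro u hu hmax hcard
      by_cases hdone : ∀ d, (∀ c, Lvec A β c ⬝ᵥ u = rhsv b val c → Lvec A β c ⬝ᵥ d = 0) → d = 0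
      · exact ⟨u, hu, hmax, hdone⟩
      · push_neg at hdone
        obtain ⟨d, hdact, hd0⟩ := hdone
        obtain ⟨u', hu', hval', hcontain, c, hc, hcd⟩ :=
          descent val β Jx hJc hJp A b hcpt u d hu hmax hdact hd0
        have hss : Act u ⊂ Act u' := by
          constructor
          · intro c' hc'
            rw [hAct, Finset.mem_filter] at hc' ⊢
            exact ⟨Finset.mem_univ _, hcontain c' hc'.2⟩
          · intro hsub
            have hcAct : c ∈ Act u' := by
              rw [hAct, Finset.mem_filter]; exact ⟨Finset.mem_univ _, hc⟩
            have := hsub hcAct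
            rw [hAct, Finset.mem_filter] at this
            exact hcd (hdact c this.2)
        have hcardlt : (Act u).card < (Act u').card := Finset.card_lt_card hss
        exact ih u' hu' (fun u'' h => (hval' ▸ hmax u'' h : Jx u'' ≤ Jx u'))
          (by omega)
  exact key (Fintype.card (Fin q ⊕ K × K)) u₀ hu₀ (fun u'' h => hmax₀ h) (by omega)


lemma exists_tuple {m : ℕ} {C : Type*} [Fintype C] (L : C → Fin m → ℝ) (act : C → Prop)
    (hS : ∀ d : Fin m → ℝ, (∀ c, act c → L c ⬝ᵥ d = 0) → d = 0) :
    ∃ t : Fin m → C, (∀ i, act (t i)) ∧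
      IsUnit (Matrix.of fun i j => L (t i) j).det := by
  classical
  set V := Submodule.span ℝ (L '' {c | act c}) with hVdef
  have hV : V = ⊤ := by
    by_contra h
    have hlt : V < ⊤ := lt_top_iff_ne_top.mpr h
    obtain ⟨f, hf0, hker⟩ := Submodule.exists_dual_map_eq_bot_of_lt_top hlt inferInstance
    set d : Fin m → ℝ := fun j => f (Pi.single j 1) with hd
    have hfd : ∀ v : Fin m → ℝ, f v = v ⬝ᵥ d := by
      intro v
      rw [LinearMap.pi_apply_eq_sum_univ f v]
      simp only [dotProduct, hd, smul_eq_mul]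
      refine Finset.sum_congr rfl fun x _ => ?_
      refine congrArg (fun z => v x * z) (congrArg f ?_)
      funext j
      simp [Pi.single_apply, eq_comm]
    have hdz : ∀ c, act c → L c ⬝ᵥ d = 0 := by
      intro c hc
      rw [← hfd]
      have h1 : L c ∈ V := Submodule.subset_span ⟨c, hc, rfl⟩
      have h2 : f (L c) ∈ V.map f := Submodule.mem_map_of_mem h1
      rw [hker] at h2
      simpa using h2
    have hd0 : d = 0 := hS d hdz
    apply hf0
    apply LinearMap.ext
    intro v
    rw [hfd, hd0]
    simp
  obtain ⟨s, hs_sub, hs_span, hs_li⟩ := exists_linearIndependent ℝ (L '' {c | act c})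
  have hsfin : s.Finite := Set.Finite.subset ((Set.toFinite _).image L) hs_sub
  haveI := hsfin.fintype
  have hspan_top : ⊤ ≤ Submodule.span ℝ (Set.range ((↑) : s → (Fin m → ℝ))) := by
    rw [Subtype.range_coe, hs_span, ← hVdef, hV]
  let bs : Module.Basis s ℝ (Fin m → ℝ) := Module.Basis.mk hs_li hspan_top
  have hcard : Fintype.card s = m := by
    have h1 := Module.finrank_eq_card_basis bs
    rw [Module.finrank_fin_fun] at h1
    exact h1.symm
  let e : Fin m ≃ s := (Fintype.equivFinOfCardEq hcard).symm
  have hpick : ∀ i : Fin m, ∃ c, act c ∧ L c = ((e i : s) : Fin m → ℝ) := by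
    intro i
    obtain ⟨c, hc, hLc⟩ := hs_sub (e i).2
    exact ⟨c, hc, hLc⟩
  choose t ht1 ht2 using hpick
  refine ⟨t, ht1, ?_⟩
  let bfin : Module.Basis (Fin m) ℝ (Fin m → ℝ) := bs.reindex e.symm
  have hb : ⇑bfin = fun i => L (t i) := by
    funext i
    rw [show bfin i = bs (e i) by simp [bfin, Module.Basis.reindex_apply], ht2 i]
    simp [bs, Module.Basis.mk_apply]
  have key : (Pi.basisFun ℝ (Fin m)).toMatrix ⇑bfin = (Matrix.of fun i j => L (t i) j)ᵀ := by
    ext i j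
    rw [hb]
    simp [Module.Basis.toMatrix_apply, Matrix.transpose_apply]
  haveI := (Pi.basisFun ℝ (Fin m)).invertibleToMatrix bfin
  have hun : IsUnit ((Pi.basisFun ℝ (Fin m)).toMatrix ⇑bfin) := isUnit_of_invertible _
  rw [key] at hun
  rw [← Matrix.det_transpose]
  exact (Matrix.isUnit_iff_isUnit_det _).mp hun

/-- candidate affine policy from a tuple of constraints -/
noncomputable def candAff {n m : ℕ} {C : Type*} (L : C → Fin m → ℝ)
    (ρ : C → ((Fin n → ℝ) →ᵃ[ℝ] ℝ)) (t : Fin m → C) :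
    (Fin n → ℝ) →ᵃ[ℝ] (Fin m → ℝ) where
  toFun := fun x => (Matrix.of fun i j => L (t i) j)⁻¹.mulVec (fun i => ρ (t i) x)
  linear := (Matrix.mulVecLin (Matrix.of fun i j => L (t i) j)⁻¹).comp
    (LinearMap.pi fun i => (ρ (t i)).linear)
  map_vadd' := by
    intro p v
    have h1 : (fun i => ρ (t i) (v +ᵥ p)) =
        (fun i => (ρ (t i)).linear v) + fun i => ρ (t i) p := by
      funext i
      exact (ρ (t i)).map_vadd' p v
    simp only [h1, Matrix.mulVec_add]
    rfl

lemma SEL {n m q : ℕ} (K : Type*) [Fintype K]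
    (P : K → ((Fin n → ℝ) →ᵃ[ℝ] ℝ)) (β : K → Fin m → ℝ)
    (J : (Fin n → ℝ) → (Fin m → ℝ) → ℝ) (hJc : ∀ x, Continuous (J x))
    (hJp : ∀ x u, ∃ k, J x u = P k x + β k ⬝ᵥ u)
    (A : Fin q → Fin m → ℝ) (b : Fin q → ℝ)
    (hne : ∃ u : Fin m → ℝ, ∀ i, A i ⬝ᵥ u ≤ b i)
    (hcpt : IsCompact {u : Fin m → ℝ | ∀ i, A i ⬝ᵥ u ≤ b i}) :
    ∃ (μ : (Fin n → ℝ) → (Fin m → ℝ)) (r : ℕ)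
      (μs : Fin r → ((Fin n → ℝ) →ᵃ[ℝ] (Fin m → ℝ))),
      ∀ x, (∀ i, A i ⬝ᵥ μ x ≤ b i) ∧
        (∀ u, (∀ i, A i ⬝ᵥ u ≤ b i) → J x u ≤ J x (μ x)) ∧
        ∃ j, μ x = μs j x := by
  classical
  set ρ : (Fin q ⊕ K × K) → ((Fin n → ℝ) →ᵃ[ℝ] ℝ) :=
    Sum.elim (fun i => AffineMap.const ℝ (Fin n → ℝ) (b i)) (fun kl => P kl.2 - P kl.1)
    with hρ
  have hρx : ∀ (x : Fin n → ℝ) (c : Fin q ⊕ K × K),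
      rhsv b (fun k => P k x) c = ρ c x := by
    intro x c
    cases c with
    | inl i => simp [rhsv, hρ]
    | inr kl => simp [rhsv, hρ]
  set T := {t : Fin m → (Fin q ⊕ K × K) //
    IsUnit (Matrix.of fun i j => Lvec A β (t i) j).det} with hT
  haveI : Fintype T := Fintype.ofFinite T
  set r := Fintype.card T with hr
  set eT : T ≃ Fin r := Fintype.equivFin T with heT
  set μs : Fin r → ((Fin n → ℝ) →ᵃ[ℝ] (Fin m → ℝ)) :=
    fun j => candAff (Lvec A β) ρ (eT.symm j).1 with hμs
  have key : ∀ x : Fin n → ℝ, ∃ u : Fin m → ℝ, (∀ i, A i ⬝ᵥ u ≤ b i) ∧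
      (∀ u'', (∀ i, A i ⬝ᵥ u'' ≤ b i) → J x u'' ≤ J x u) ∧
      ∃ t : Fin m → (Fin q ⊕ K × K),
        (∀ i, Lvec A β (t i) ⬝ᵥ u = rhsv b (fun k => P k x) (t i)) ∧
        IsUnit (Matrix.of fun i j => Lvec A β (t i) j).det := by
    intro x
    obtain ⟨u, hu, hmax, htriv⟩ :=
      lemA (fun k => P k x) β (J x) (hJc x) (hJp x) A b hne hcpt
    obtain ⟨t, ht1, ht2⟩ := exists_tuple (Lvec A β)
      (fun c => Lvec A β c ⬝ᵥ u = rhsv b (fun k => P k x) c) htriv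
    exact ⟨u, hu, hmax, t, ht1, ht2⟩
  choose μ hfeas hmax ht using key
  refine ⟨μ, r, μs, fun x => ?_⟩
  refine ⟨hfeas x, hmax x, ?_⟩
  obtain ⟨t, hact, hdet⟩ := ht x
  refine ⟨eT ⟨t, hdet⟩, ?_⟩
  set M := (Matrix.of fun i j => Lvec A β (t i) j) with hM
  have hμsval : μs (eT ⟨t, hdet⟩) x = M⁻¹.mulVec (fun i => ρ (t i) x) := by
    rw [hμs]
    simp only [Equiv.symm_apply_apply]
    rfl
  have hsys : (fun i => ρ (t i) x) = M.mulVec (μ x) := by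
    funext i
    rw [← hρx x (t i), ← hact i]
    rfl
  rw [hμsval, hsys, Matrix.mulVec_mulVec, Matrix.nonsing_inv_mul M hdet,
    Matrix.one_mulVec]

lemma affsum_apply {α : Type*} {n : ℕ} (s : Finset α) (F : α → ((Fin n → ℝ) →ᵃ[ℝ] ℝ))
    (x : Fin n → ℝ) : (∑ a ∈ s, F a) x = ∑ a ∈ s, F a x := by
  induction s using Finset.cons_induction with
  | empty => simp
  | cons a s ha ih =>
    rw [Finset.sum_cons, Finset.sum_cons, AffineMap.coe_add, Pi.add_apply, ih]


end Helpers

/-- Lemma 1, policy part: with a continuous piecewise affine stage cost `g`, a continuous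
piecewise affine value function `V`, discount `γ ≥ 0`, a finitely supported disturbance
`w ∈ W` with probabilities `p w` and affine dynamics `f w`, and a nonempty compact
polyhedral feasible set `U = {u | ∀ i, ⟨A i, u⟩ ≤ b i}`, there exists a policy
`μ : ℝ^n → ℝ^m` and finitely many affine maps `μ₁, …, μ_r` such that for every `x`,
`μ(x)` is feasible, `μ(x)` maximizes the Bellman objective
`Σ_w p w · (g(x,u) + γ · V(f_w(x,u)))` over `U`, and `μ(x) = μ_j(x)` for some `j`:
a piecewise linear value function admits a piecewise linear optimal policy. -/
theorem bellman_pwa_optimal_policy {n m : ℕ}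
    (g : (Fin n → ℝ) → (Fin m → ℝ) → ℝ) (V : (Fin n → ℝ) → ℝ) (γ : ℝ)
    (hg : IsCPWA2 g) (hV : IsCPWA V) (hγ : 0 ≤ γ)
    (W : Type) [Fintype W] (p : W → ℝ) (hp : ∀ w, 0 ≤ p w) (hpsum : ∑ w, p w = 1)
    (f : W → (((Fin n → ℝ) × (Fin m → ℝ)) →ᵃ[ℝ] (Fin n → ℝ)))
    (q : ℕ) (A : Fin q → Fin m → ℝ) (b : Fin q → ℝ)
    (hne : {u : Fin m → ℝ | ∀ i, (∑ j, A i j * u j) ≤ b i}.Nonempty)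
    (hcpt : IsCompact {u : Fin m → ℝ | ∀ i, (∑ j, A i j * u j) ≤ b i}) :
    ∃ (μ : (Fin n → ℝ) → (Fin m → ℝ)) (r : ℕ)
      (μs : Fin r → ((Fin n → ℝ) →ᵃ[ℝ] (Fin m → ℝ))),
      ∀ x : Fin n → ℝ,
        μ x ∈ {u : Fin m → ℝ | ∀ i, (∑ j, A i j * u j) ≤ b i} ∧
        (∀ u ∈ {u : Fin m → ℝ | ∀ i, (∑ j, A i j * u j) ≤ b i},
          ∑ w, p w * (g x u + γ * V (f w (x, u))) ≤
            ∑ w, p w * (g x (μ x) + γ * V (f w (x, μ x)))) ∧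
        ∃ j : Fin r, μ x = μs j x := by
  classical
  obtain ⟨hgc, rg, ag, bg, cg, hgp⟩ := hg
  obtain ⟨hVc, rV, aV, cV, hVp⟩ := hV
  haveI : Fintype (W → Fin rV) := Fintype.ofFinite _
  set J : (Fin n → ℝ) → (Fin m → ℝ) → ℝ :=
    fun x u => ∑ w, p w * (g x u + γ * V (f w (x, u))) with hJ
  -- slope data
  set E : W → Fin m → Fin n → ℝ :=
    fun w jm => (f w).linear (0, Pi.single jm 1) with hE
  set βV : W → Fin rV → Fin m → ℝ :=
    fun w k jm => ∑ jn, aV k jn * E w jm jn with hβV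
  set β : (Fin rg × (W → Fin rV)) → Fin m → ℝ :=
    fun k jm => bg k.1 jm + γ * ∑ w, p w * βV w (k.2 w) jm with hβ
  -- affine x-part
  set LV : W → Fin rV → ((Fin n → ℝ) →ₗ[ℝ] ℝ) :=
    fun w k => ∑ jn, aV k jn •
      ((LinearMap.proj jn).comp ((f w).linear.comp (LinearMap.inl ℝ (Fin n → ℝ) (Fin m → ℝ))))
    with hLV
  set PV : W → Fin rV → ((Fin n → ℝ) →ᵃ[ℝ] ℝ) :=
    fun w k => (LV w k).toAffineMap +
      AffineMap.const ℝ (Fin n → ℝ) (∑ jn, aV k jn * (f w 0) jn + cV k) with hPV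
  set Lg : Fin rg → ((Fin n → ℝ) →ₗ[ℝ] ℝ) :=
    fun i => ∑ jn, ag i jn • (LinearMap.proj jn : (Fin n → ℝ) →ₗ[ℝ] ℝ) with hLg
  set P : (Fin rg × (W → Fin rV)) → ((Fin n → ℝ) →ᵃ[ℝ] ℝ) :=
    fun k => (Lg k.1).toAffineMap + AffineMap.const ℝ (Fin n → ℝ) (cg k.1)
      + γ • ∑ w, p w • PV w (k.2 w) with hP
  -- evaluation lemmas
  have hLgap : ∀ i x, Lg i x = ∑ jn, ag i jn * x jn := by
    intro i x
    rw [hLg]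
    simp [LinearMap.sum_apply, smul_eq_mul]
  have hPVap : ∀ w k x, PV w k x = ∑ jn, aV k jn * (f w (x, 0)) jn + cV k := by
    intro w k x
    have hdec : f w (x, 0) = (f w).linear (x, 0) + f w 0 := by
      have h1 := (f w).map_vadd (0 : (Fin n → ℝ) × (Fin m → ℝ))
        ((x, 0) : (Fin n → ℝ) × (Fin m → ℝ))
      simpa [vadd_eq_add] using h1
    rw [hPV]
    simp only [AffineMap.coe_add, Pi.add_apply, LinearMap.coe_toAffineMap,
      AffineMap.const_apply, hLV, LinearMap.sum_apply, LinearMap.smul_apply,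
      LinearMap.comp_apply, LinearMap.inl_apply, LinearMap.proj_apply, smul_eq_mul]
    rw [hdec]
    rw [← add_assoc]
    congr 1
    rw [← Finset.sum_add_distrib]
    refine Finset.sum_congr rfl fun jn _ => ?_
    simp [mul_add]
  have hPap : ∀ k x, P k x = (∑ jn, ag k.1 jn * x jn + cg k.1)
      + γ * ∑ w, p w * (∑ jn, aV (k.2 w) jn * (f w (x, 0)) jn + cV (k.2 w)) := by
    intro k x
    rw [hP]
    simp only [AffineMap.coe_add, Pi.add_apply, AffineMap.coe_smul, Pi.smul_apply,
      smul_eq_mul, AffineMap.const_apply, LinearMap.coe_toAffineMap]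
    rw [affsum_apply, hLgap]
    congr 1
    congr 1
    refine Finset.sum_congr rfl fun w _ => ?_
    rw [AffineMap.coe_smul, Pi.smul_apply, smul_eq_mul, hPVap]
  -- continuity
  have hJc : ∀ x, Continuous (J x) := by
    intro x
    rw [hJ]
    apply continuous_finset_sum
    intro w _
    apply Continuous.mul continuous_const
    apply Continuous.add
    · exact hgc.comp (Continuous.prodMk_right x)
    · apply Continuous.mul continuous_const
      exact hVc.comp ((f w).continuous_of_finiteDimensional.comp (Continuous.prodMk_right x))
  -- pointwise pieces
  have hJp : ∀ x u, ∃ k, J x u = P k x + β k ⬝ᵥ u := by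
    intro x u
    obtain ⟨i, hi⟩ := hgp x u
    choose κ hκv using fun w => hVp (f w (x, u))
    refine ⟨(i, κ), ?_⟩
    have hdec : ∀ w, ∀ jn, (f w (x, u)) jn = (f w (x, 0)) jn + ∑ jm, u jm * E w jm jn := by
      intro w jn
      have h2 : f w (x, u) = (f w).linear (0, u) + f w (x, 0) := by
        have h1 := (f w).map_vadd ((x, 0) : (Fin n → ℝ) × (Fin m → ℝ))
          ((0, u) : (Fin n → ℝ) × (Fin m → ℝ))
        simpa [vadd_eq_add, Prod.mk_add_mk] using h1
      have h3 : ((f w).linear (0, u)) jn = ∑ jm, u jm * E w jm jn := by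
        have h4 := LinearMap.pi_apply_eq_sum_univ
          ((LinearMap.proj jn).comp ((f w).linear.comp
            (LinearMap.inr ℝ (Fin n → ℝ) (Fin m → ℝ)))) u
        simp only [LinearMap.comp_apply, LinearMap.inr_apply, LinearMap.proj_apply,
          smul_eq_mul] at h4
        rw [h4]
        refine Finset.sum_congr rfl fun jm _ => ?_
        have hsingle : (fun j => if jm = j then (1:ℝ) else 0) = Pi.single jm 1 := by
          funext j
          simp [Pi.single_apply, eq_comm]
        rw [hsingle]
      rw [h2]
      simp only [Pi.add_apply]
      rw [h3]
      ring
    have step1 : J x u = g x u + γ * ∑ w, p w * V (f w (x, u)) := by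
      simp only [hJ]
      have : ∑ w, p w * (g x u + γ * V (f w (x, u))) =
          (∑ w, p w) * g x u + γ * ∑ w, p w * V (f w (x, u)) := by
        rw [Finset.sum_mul, Finset.mul_sum, ← Finset.sum_add_distrib]
        exact Finset.sum_congr rfl fun w _ => by ring
      rw [this, hpsum, one_mul]
    have step2 : ∀ w, V (f w (x, u)) =
        (∑ jn, aV (κ w) jn * (f w (x, 0)) jn + cV (κ w))
        + ∑ jn, aV (κ w) jn * ∑ jm, u jm * E w jm jn := by
      intro w
      rw [hκv w]
      have : ∀ jn, aV (κ w) jn * (f w (x, u)) jn =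
          aV (κ w) jn * (f w (x, 0)) jn + aV (κ w) jn * ∑ jm, u jm * E w jm jn := by
        intro jn; rw [hdec w jn]; ring
      rw [Finset.sum_congr rfl fun jn _ => this jn, Finset.sum_add_distrib]
      ring
    have cross : ∑ w, p w * (∑ jn, aV (κ w) jn * ∑ jm, u jm * E w jm jn)
        = ∑ jm, (∑ w, p w * βV w (κ w) jm) * u jm := by
      have hw : ∀ w, (∑ jn, aV (κ w) jn * ∑ jm, u jm * E w jm jn)
          = ∑ jm, βV w (κ w) jm * u jm := by
        intro w
        rw [hβV]
        simp only [Finset.mul_sum, Finset.sum_mul]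
        rw [Finset.sum_comm]
        refine Finset.sum_congr rfl fun jm _ => Finset.sum_congr rfl fun jn _ => by ring
      rw [Finset.sum_congr rfl fun w _ => by rw [hw w]]
      simp only [Finset.mul_sum]
      rw [Finset.sum_comm]
      refine Finset.sum_congr rfl fun jm _ => ?_
      rw [Finset.sum_mul]
      refine Finset.sum_congr rfl fun w _ => by ring
    have hβdot : β (i, κ) ⬝ᵥ u = ∑ jm, bg i jm * u jm
        + γ * ∑ jm, (∑ w, p w * βV w (κ w) jm) * u jm := by
      rw [hβ]
      simp only [dotProduct]
      rw [Finset.mul_sum, ← Finset.sum_add_distrib]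
      exact Finset.sum_congr rfl fun jm _ => by ring
    have hsplit : ∑ w, p w * V (f w (x, u)) =
        ∑ w, p w * (∑ jn, aV (κ w) jn * (f w (x, 0)) jn + cV (κ w))
        + ∑ w, p w * (∑ jn, aV (κ w) jn * ∑ jm, u jm * E w jm jn) := by
      rw [← Finset.sum_add_distrib]
      refine Finset.sum_congr rfl fun w _ => ?_
      rw [step2 w]
      ring
    rw [step1, hi, hPap, hβdot, hsplit, cross]
    ring
  -- apply the selection lemma
  obtain ⟨u₀, hu₀⟩ := hne
  obtain ⟨μ, r, μs, h⟩ := SEL (Fin rg × (W → Fin rV)) P β J hJc hJp A b ⟨u₀, hu₀⟩ hcpt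
  exact ⟨μ, r, μs, fun x => ⟨(h x).1, fun u hu => (h x).2.1 u hu, (h x).2.2⟩⟩
end
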